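/- arXiv:1307.1529 — 8 statements merged into one kernel-verified Lean document; each statement's English description precedes it below -/
import Mathlib

section
/- Let n ≥ 3 and let z ∈ ℝⁿ be a unit vector. There exist finite sets A, A' ⊆ ℝⁿ such that, setting K = conv(A) and K' = conv(A'), both K and K' have nonempty interior, K is symmetric about the origin (K = −K), K' is not a translate of K (for every t ∈ ℝⁿ, K' ≠ K + t), and for every x ∈ ℝⁿ one has w(K ∩ (K + x), z) = w(K' ∩ (K' + x), z). (Theorem 1.4: a centrally symmetric convex polytope need not be determined by its width-covariogram in dimension n ≥ 3.) -/
open MeasureTheory Set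
open scoped Pointwise

noncomputable def w {E : Type*} [NormedAddCommGroup E] [InnerProductSpace ℝ E]
    (A : Set E) (z : E) : ℝ :=
  sSup ((fun a => (inner ℝ a z : ℝ)) '' A) - sInf ((fun a => (inner ℝ a z : ℝ)) '' A)

/-- inner ℝ product with a fixed vector on the left, as a linear map (real case) -/
noncomputable def innerLM {E : Type*} [NormedAddCommGroup E] [InnerProductSpace ℝ E]
    (v : E) : E →ₗ[ℝ] ℝ where
  toFun w := (inner ℝ v w : ℝ)
  map_add' a b := inner_add_right v a b
  map_smul' r x := real_inner_smul_right v x r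

lemma innerLM_apply {E : Type*} [NormedAddCommGroup E] [InnerProductSpace ℝ E]
    (v x : E) : innerLM v x = (inner ℝ v x : ℝ) := rfl

/-- decomposition of the intersection for an orthogonal-type product -/
lemma inter_add_decomp {E : Type*} [NormedAddCommGroup E] [InnerProductSpace ℝ E]
    (V W : Submodule ℝ E) (hVW : ∀ a : E, a ∈ V → a ∈ W → a = 0)
    (P Q : Set E) (hP : P ⊆ (W : Set E)) (hQ : Q ⊆ (V : Set E))
    (xW xV : E) (hxW : xW ∈ W) (hxV : xV ∈ V) :
    (P + Q) ∩ ((· + (xW + xV)) '' (P + Q))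
      = (P ∩ ((· + xW) '' P)) + (Q ∩ ((· + xV) '' Q)) := by
  ext k
  constructor
  · rintro ⟨⟨p, hp, q, hq, rfl⟩, m, ⟨p', hp', q', hq', rfl⟩, hm⟩
    -- hm : p' + q' + (xW + xV) = p + q
    have hm' : p' + q' + (xW + xV) = p + q := hm
    have hd : p - (p' + xW) = (q' + xV) - q := by
      linear_combination (norm := module) -hm' 
    have hdW : p - (p' + xW) ∈ W := by
      exact Submodule.sub_mem W (hP hp) (Submodule.add_mem W (hP hp') hxW)
    have hdV : p - (p' + xW) ∈ V := by
      rw [hd]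
      exact Submodule.sub_mem V (Submodule.add_mem V (hQ hq') hxV) (hQ hq)
    have hd0 : p - (p' + xW) = 0 := hVW _ hdV hdW
    have hpe : p = p' + xW := by linear_combination (norm := module) hd0
    have hqe : q = q' + xV := by
      have h2 : (q' + xV) - q = 0 := by rw [← hd]; exact hd0
      linear_combination (norm := module) -h2
    exact ⟨p, ⟨hp, p', hp', hpe.symm⟩, q, ⟨hq, q', hq', hqe.symm⟩, rfl⟩
  · rintro ⟨p, ⟨hp, p', hp', hpe⟩, q, ⟨hq, q', hq', hqe⟩, rfl⟩
    refine ⟨⟨p, hp, q, hq, rfl⟩, p' + q', ⟨p', hp', q', hq', rfl⟩, ?_⟩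
    rw [← hpe, ← hqe]
    module

/-- image of a sum set under an additive map killing the second factor -/
lemma image_add_of_ker {E : Type*} [AddCommGroup E] (f : E → ℝ)
    (hf : ∀ a b : E, f (a + b) = f a + f b) (X Y : Set E)
    (hY : ∀ y ∈ Y, f y = 0) (hYne : Y.Nonempty) : f '' (X + Y) = f '' X := by
  obtain ⟨y₀, hy₀⟩ := hYne
  ext r
  constructor
  · rintro ⟨m, ⟨a, ha, b, hb, rfl⟩, rfl⟩
    exact ⟨a, ha, by rw [hf, hY b hb, add_zero]⟩
  · rintro ⟨a, ha, rfl⟩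
    exact ⟨a + y₀, ⟨a, ha, y₀, hy₀, rfl⟩, by rw [hf, hY y₀ hy₀, add_zero]⟩

/-- difference bodies of `conv (S - S)` and `conv (2 • S)` agree -/
lemma diff_body_eq {E : Type*} [NormedAddCommGroup E] [InnerProductSpace ℝ E] (S : Set E) :
    convexHull ℝ (S - S) - convexHull ℝ (S - S)
      = convexHull ℝ ((2:ℝ) • S) - convexHull ℝ ((2:ℝ) • S) := by
  have hsub : ∀ X : Set E, convexHull ℝ X - convexHull ℝ X = convexHull ℝ (X - X) := by
    intro X
    rw [sub_eq_add_neg, sub_eq_add_neg, ← convexHull_neg, ← convexHull_add]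
  rw [hsub, hsub]
  have h2S : (2:ℝ) • S - (2:ℝ) • S = (2:ℝ) • (S - S) := by
    ext a
    constructor
    · rintro ⟨b, ⟨s, hs, rfl⟩, c, ⟨s', hs', rfl⟩, rfl⟩
      exact ⟨s - s', ⟨s, hs, s', hs', rfl⟩, by module⟩
    · rintro ⟨b, ⟨s, hs, s', hs', rfl⟩, rfl⟩
      exact ⟨(2:ℝ) • s, ⟨s, hs, rfl⟩, (2:ℝ) • s', ⟨s', hs', rfl⟩, by module⟩
  rw [h2S]
  set H := S - S with hH
  have hHneg : ∀ h ∈ H, -h ∈ H := by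
    rintro h ⟨s, hs, s', hs', rfl⟩
    exact ⟨s', hs', s, hs, by module⟩
  apply le_antisymm
  · -- conv (H - H) ⊆ conv (2 • H)
    apply convexHull_min _ (convex_convexHull ℝ _)
    rintro a ⟨h₁, hh₁, h₂, hh₂, rfl⟩
    have m1 : (2:ℝ) • h₁ ∈ convexHull ℝ ((2:ℝ) • H) :=
      subset_convexHull ℝ _ ⟨h₁, hh₁, rfl⟩
    have m2 : (2:ℝ) • (-h₂) ∈ convexHull ℝ ((2:ℝ) • H) :=
      subset_convexHull ℝ _ ⟨-h₂, hHneg _ hh₂, rfl⟩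
    have := (convex_convexHull ℝ ((2:ℝ) • H)) m1 m2
      (by norm_num : (0:ℝ) ≤ 1/2) (by norm_num : (0:ℝ) ≤ 1/2) (by norm_num)
    convert this using 1
    module
  · -- conv (2 • H) ⊆ conv (H - H)
    apply convexHull_mono
    rintro a ⟨h, hh, rfl⟩
    exact ⟨h, hh, -h, hHneg _ hh, by module⟩

lemma interior_hull_nonempty {n : ℕ} {A : Set (EuclideanSpace ℝ (Fin n))}
    (h0 : (0 : EuclideanSpace ℝ (Fin n)) ∈ A) (hs : Submodule.span ℝ A = ⊤) :
    (interior (convexHull ℝ A)).Nonempty := by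
  rw [(convex_convexHull ℝ A).interior_nonempty_iff_affineSpan_eq_top, affineSpan_convexHull,
    AffineSubspace.affineSpan_eq_top_iff_vectorSpan_eq_top_of_nonempty ℝ _ _ ⟨0, h0⟩,
    eq_top_iff, ← hs, vectorSpan_def]
  apply Submodule.span_mono
  intro a ha
  exact ⟨a, ha, 0, h0, by simp⟩

lemma inter_translate_nonempty_iff {E : Type*} [AddCommGroup E] (Q : Set E) (y : E) :
    (Q ∩ ((· + y) '' Q)).Nonempty ↔ y ∈ Q - Q := by
  constructor
  · rintro ⟨a, ha, b, hb, hbe⟩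
    have h : b + y = a := hbe
    exact ⟨a, ha, b, hb, by show a - b = y; rw [← h, add_sub_cancel_left]⟩
  · rintro ⟨a, ha, b, hb, hab⟩
    refine ⟨a, ha, b, hb, ?_⟩
    show b + y = a
    rw [← hab, add_comm, sub_add_cancel]

lemma neg_symm_insert {E : Type*} [AddCommGroup E] (X : Set E) :
    -(insert (0:E) (X ∪ -X)) = insert (0:E) (X ∪ -X) := by
  ext a
  simp only [Set.mem_neg, Set.mem_insert_iff, Set.mem_union, Set.mem_neg, neg_eq_zero, neg_neg]
  tauto

/-- In every dimension `n ≥ 3` there is an origin-symmetric convex polytope `K = conv A`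
and a convex polytope `K' = conv A'` which is not a translate of `K` but has the same
width-covariogram in direction `z`. -/
theorem exists_centrally_symmetric_polytope_not_determined_by_width_covariogram
    (n : ℕ) (hn : 3 ≤ n) (z : EuclideanSpace ℝ (Fin n)) (hz : ‖z‖ = 1) :
    ∃ A A' : Set (EuclideanSpace ℝ (Fin n)), A.Finite ∧ A'.Finite ∧
      (interior (convexHull ℝ A)).Nonempty ∧
      (interior (convexHull ℝ A')).Nonempty ∧
      convexHull ℝ A = -(convexHull ℝ A) ∧
      (∀ t : EuclideanSpace ℝ (Fin n), convexHull ℝ A' ≠ (· + t) '' (convexHull ℝ A)) ∧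
      ∀ x : EuclideanSpace ℝ (Fin n),
        w (convexHull ℝ A ∩ ((· + x) '' (convexHull ℝ A))) z
          = w (convexHull ℝ A' ∩ ((· + x) '' (convexHull ℝ A'))) z := by
  classical
  have hz0 : z ≠ 0 := by intro h; rw [h, norm_zero] at hz; norm_num at hz
  -- two orthonormal vectors orthogonal to z
  have hfr : 2 ≤ Module.finrank ℝ ((ℝ ∙ z)ᗮ : Submodule ℝ (EuclideanSpace ℝ (Fin n))) := by
    have h1 := Submodule.finrank_add_finrank_orthogonal (K := (ℝ ∙ z :
      Submodule ℝ (EuclideanSpace ℝ (Fin n))))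
    rw [finrank_span_singleton hz0, finrank_euclideanSpace_fin] at h1
    omega
  set b := stdOrthonormalBasis ℝ ((ℝ ∙ z)ᗮ : Submodule ℝ (EuclideanSpace ℝ (Fin n))) with hb
  set u₁ : EuclideanSpace ℝ (Fin n) := ↑(b ⟨0, by omega⟩) with hu₁
  set u₂ : EuclideanSpace ℝ (Fin n) := ↑(b ⟨1, by omega⟩) with hu₂
  have hon := b.orthonormal
  rw [orthonormal_iff_ite] at hon
  have h11 : (inner ℝ u₁ u₁ : ℝ) = 1 := by
    rw [hu₁, ← Submodule.coe_inner, hon]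
    simp
  have h22 : (inner ℝ u₂ u₂ : ℝ) = 1 := by
    rw [hu₂, ← Submodule.coe_inner, hon]
    simp
  have h12 : (inner ℝ u₁ u₂ : ℝ) = 0 := by
    rw [hu₁, hu₂, ← Submodule.coe_inner, hon]
    norm_num [Fin.ext_iff]
  have h21 : (inner ℝ u₂ u₁ : ℝ) = 0 := by rw [real_inner_comm]; exact h12
  -- V and W
  set V : Submodule ℝ (EuclideanSpace ℝ (Fin n)) := Submodule.span ℝ {u₁, u₂} with hV
  set W : Submodule ℝ (EuclideanSpace ℝ (Fin n)) := Vᗮ with hW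
  have hu₁V : u₁ ∈ V := Submodule.subset_span (Set.mem_insert _ _)
  have hu₂V : u₂ ∈ V := Submodule.subset_span (Set.mem_insert_of_mem _ rfl)
  have hVZ : V ≤ (ℝ ∙ z)ᗮ := by
    rw [hV, Submodule.span_le]
    rintro a (rfl | rfl)
    · exact (b ⟨0, by omega⟩).2
    · exact (b ⟨1, by omega⟩).2
  have hzW : z ∈ W := by
    have h1 : z ∈ (ℝ ∙ z)ᗮᗮ := Submodule.le_orthogonal_orthogonal _
      (Submodule.mem_span_singleton_self z)
    exact Submodule.orthogonal_le hVZ h1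
  have hzV0 : ∀ q, q ∈ V → (inner ℝ q z : ℝ) = 0 := fun q hq =>
    (Submodule.mem_orthogonal V z).mp hzW q hq
  have hVW : ∀ a : EuclideanSpace ℝ (Fin n), a ∈ V → a ∈ W → a = 0 := by
    intro a haV haW
    exact Submodule.disjoint_def.mp V.orthogonal_disjoint a haV haW
  -- the generating sets
  set pWl : EuclideanSpace ℝ (Fin n) →ₗ[ℝ] EuclideanSpace ℝ (Fin n) :=
    W.subtype.comp (W.orthogonalProjectionOnto).toLinearMap with hpWl
  set SPX : Set (EuclideanSpace ℝ (Fin n)) :=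
    ⇑pWl '' Set.range (fun i => EuclideanSpace.single i (1:ℝ)) with hSPX
  set SP : Set (EuclideanSpace ℝ (Fin n)) := insert 0 (SPX ∪ -SPX) with hSP
  set S : Set (EuclideanSpace ℝ (Fin n)) := {0, u₁, u₂} with hS
  set H : Set (EuclideanSpace ℝ (Fin n)) := S - S with hH
  set A : Set (EuclideanSpace ℝ (Fin n)) := SP + H with hA
  set A' : Set (EuclideanSpace ℝ (Fin n)) := SP + (2:ℝ) • S with hA'
  -- basic membership facts
  have h0SP : (0 : EuclideanSpace ℝ (Fin n)) ∈ SP := Set.mem_insert _ _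
  have h0S : (0 : EuclideanSpace ℝ (Fin n)) ∈ S := Set.mem_insert _ _
  have hu₁S : u₁ ∈ S := Set.mem_insert_of_mem _ (Set.mem_insert _ _)
  have hu₂S : u₂ ∈ S := Set.mem_insert_of_mem _ (Set.mem_insert_of_mem _ rfl)
  have h0H : (0 : EuclideanSpace ℝ (Fin n)) ∈ H := ⟨0, h0S, 0, h0S, by simp⟩
  have h02S : (0 : EuclideanSpace ℝ (Fin n)) ∈ (2:ℝ) • S := ⟨0, h0S, by simp⟩
  have h0A : (0 : EuclideanSpace ℝ (Fin n)) ∈ A := ⟨0, h0SP, 0, h0H, by simp⟩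
  have h0A' : (0 : EuclideanSpace ℝ (Fin n)) ∈ A' := ⟨0, h0SP, 0, h02S, by simp⟩
  -- subset facts
  have hSPW : SP ⊆ (W : Set (EuclideanSpace ℝ (Fin n))) := by
    rintro p (rfl | hp)
    · exact W.zero_mem
    rcases hp with ⟨q, hq, rfl⟩ | hp
    · exact (W.orthogonalProjectionOnto q).2
    · rw [Set.mem_neg] at hp
      rcases hp with ⟨q, hq, hqe⟩
      have : p = -(pWl q) := by rw [hqe, neg_neg]
      rw [this]
      exact W.neg_mem (W.orthogonalProjectionOnto q).2
  have hSV : S ⊆ (V : Set (EuclideanSpace ℝ (Fin n))) := by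
    rintro s (rfl | rfl | rfl)
    · exact V.zero_mem
    · exact hu₁V
    · exact hu₂V
  have hHV : H ⊆ (V : Set (EuclideanSpace ℝ (Fin n))) := by
    rintro a ⟨s, hs, s', hs', rfl⟩
    exact V.sub_mem (hSV hs) (hSV hs')
  have h2SV : (2:ℝ) • S ⊆ (V : Set (EuclideanSpace ℝ (Fin n))) := by
    rintro a ⟨s, hs, rfl⟩
    exact V.smul_mem _ (hSV hs)
  -- finiteness
  have hSPfin : SP.Finite := by
    apply Set.Finite.insert
    have hX : SPX.Finite := (Set.finite_range _).image _
    exact hX.union hX.neg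
  have hSfin : S.Finite := (Set.finite_singleton _).insert _ |>.insert _
  have hAfin : A.Finite := hSPfin.add (hSfin.sub hSfin)
  have hA'fin : A'.Finite := hSPfin.add (hSfin.smul_set)
  -- spans
  have hWle : ∀ B : Set (EuclideanSpace ℝ (Fin n)), SP ⊆ B → W ≤ Submodule.span ℝ B := by
    intro B hSPB
    intro x hx
    have h1 : pWl x = x := (Submodule.starProjection_eq_self_iff (K := W)).mpr hx
    have h2 : x ∈ Submodule.map pWl (Submodule.span ℝ
        (Set.range (fun i => EuclideanSpace.single i (1:ℝ)))) := by
      refine ⟨x, ?_, h1⟩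
      have hb1 := (EuclideanSpace.basisFun (Fin n) ℝ).toBasis.span_eq
      rw [OrthonormalBasis.coe_toBasis] at hb1
      rw [show (fun i => EuclideanSpace.single i (1:ℝ)) = ⇑(EuclideanSpace.basisFun (Fin n) ℝ)
        from funext fun i => (EuclideanSpace.basisFun_apply (𝕜 := ℝ) (ι := Fin n) i).symm, hb1]
      trivial
    rw [Submodule.map_span] at h2
    have h3 : SPX ⊆ B := fun a ha => hSPB (Set.mem_insert_of_mem _ (Or.inl ha))
    exact Submodule.span_mono h3 h2
  have hSPsubA : SP ⊆ A := fun p hp => ⟨p, hp, 0, h0H, by simp⟩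
  have hSPsubA' : SP ⊆ A' := fun p hp => ⟨p, hp, 0, h02S, by simp⟩
  have hWV : W ⊔ V = ⊤ := by
    rw [sup_comm, hW]
    exact Submodule.sup_orthogonal_of_hasOrthogonalProjection
  have hspanA : Submodule.span ℝ A = ⊤ := by
    rw [eq_top_iff, ← hWV]
    apply sup_le (hWle A hSPsubA)
    rw [hV, Submodule.span_le]
    rintro a (rfl | rfl)
    · exact Submodule.subset_span ⟨0, h0SP, u₁, ⟨u₁, hu₁S, 0, h0S, by simp⟩, by simp⟩
    · exact Submodule.subset_span ⟨0, h0SP, u₂, ⟨u₂, hu₂S, 0, h0S, by simp⟩, by simp⟩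
  have hspanA' : Submodule.span ℝ A' = ⊤ := by
    rw [eq_top_iff, ← hWV]
    apply sup_le (hWle A' hSPsubA')
    rw [hV, Submodule.span_le]
    have hmem : ∀ u, u ∈ S → u ∈ (Submodule.span ℝ A' : Set (EuclideanSpace ℝ (Fin n))) := by
      intro u hu
      have h2u : (2:ℝ) • u ∈ Submodule.span ℝ A' :=
        Submodule.subset_span ⟨0, h0SP, (2:ℝ) • u, ⟨u, hu, rfl⟩, by simp⟩
      have := Submodule.smul_mem (Submodule.span ℝ A') (1/2 : ℝ) h2u
      rwa [show (1/2 : ℝ) • ((2:ℝ) • u) = u by module] at this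
    rintro a (rfl | rfl)
    · exact hmem u₁ hu₁S
    · exact hmem u₂ hu₂S
  have hintA := interior_hull_nonempty h0A hspanA
  have hintA' := interior_hull_nonempty h0A' hspanA'
  -- symmetry
  have hHneg : -H = H := by
    ext a
    rw [Set.mem_neg]
    constructor
    · rintro ⟨s, hs, s', hs', he⟩
      exact ⟨s', hs', s, hs, by rw [← neg_neg a, ← he]; show s' - s = -(s - s'); module⟩
    · rintro ⟨s, hs, s', hs', rfl⟩
      exact ⟨s', hs', s, hs, by show s' - s = -(s - s'); module⟩
  have hSPneg : -SP = SP := neg_symm_insert SPX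
  have hAneg : -A = A := by
    rw [hA, neg_add_rev, hSPneg, hHneg, add_comm]
  have hsymm : convexHull ℝ A = -(convexHull ℝ A) := by
    conv_lhs => rw [← hAneg, convexHull_neg]
  -- hull decompositions
  have hKdec : convexHull ℝ A = convexHull ℝ SP + convexHull ℝ H := convexHull_add _ _
  have hK'dec : convexHull ℝ A' = convexHull ℝ SP + convexHull ℝ ((2:ℝ) • S) :=
    convexHull_add _ _
  have hPW : convexHull ℝ SP ⊆ (W : Set (EuclideanSpace ℝ (Fin n))) :=
    convexHull_min hSPW W.convex
  have hQHV : convexHull ℝ H ⊆ (V : Set (EuclideanSpace ℝ (Fin n))) :=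
    convexHull_min hHV V.convex
  have hQ2V : convexHull ℝ ((2:ℝ) • S) ⊆ (V : Set (EuclideanSpace ℝ (Fin n))) :=
    convexHull_min h2SV V.convex
  refine ⟨A, A', hAfin, hA'fin, hintA, hintA', hsymm, ?_, ?_⟩
  · -- not a translate
    intro t ht
    have hrefl : ∀ s, s ∈ convexHull ℝ A' ↔ t + t - s ∈ convexHull ℝ A' := by
      intro s
      rw [ht]
      constructor
      · rintro ⟨k, hk, rfl⟩
        have hk' : -k ∈ convexHull ℝ A := by
          rw [hsymm, Set.mem_neg, neg_neg]; exact hk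
        exact ⟨-k, hk', by show -k + t = t + t - (k + t); module⟩
      · rintro ⟨k, hk, hke⟩
        have hk' : -k ∈ convexHull ℝ A := by
          rw [hsymm, Set.mem_neg, neg_neg]; exact hk
        refine ⟨-k, hk', ?_⟩
        show -k + t = s
        have hke' : k + t = t + t - s := hke
        linear_combination (norm := module) -hke'
    have key : ∀ v : EuclideanSpace ℝ (Fin n),
        ((fun a => (inner ℝ v a : ℝ)) '' (convexHull ℝ A') = Set.Icc 0 2) →
        (inner ℝ v t : ℝ) = 1 := by
      intro v himg
      have h2 : (fun a => (inner ℝ v a : ℝ)) '' (convexHull ℝ A')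
          = (fun r => (inner ℝ v (t + t) : ℝ) - r) ''
            ((fun a => (inner ℝ v a : ℝ)) '' (convexHull ℝ A')) := by
        ext r
        constructor
        · rintro ⟨s, hs, rfl⟩
          refine ⟨(inner ℝ v (t + t - s) : ℝ), ⟨t + t - s, (hrefl s).mp hs, rfl⟩, ?_⟩
          show (inner ℝ v (t + t) : ℝ) - (inner ℝ v (t + t - s) : ℝ) = (inner ℝ v s : ℝ)
          rw [inner_sub_right]
          ring
        · rintro ⟨r', ⟨s, hs, rfl⟩, rfl⟩
          exact ⟨t + t - s, (hrefl s).mp hs, by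
            show (inner ℝ v (t + t - s) : ℝ) = (inner ℝ v (t + t) : ℝ) - (inner ℝ v s : ℝ)
            rw [inner_sub_right]⟩
      rw [himg, Set.image_const_sub_Icc] at h2
      set c : ℝ := (inner ℝ v (t + t) : ℝ) with hc
      have hcle : c ≤ 2 := by
        have : c - 0 ∈ Set.Icc (c - 2) (c - 0) := ⟨by linarith, le_refl _⟩
        rw [← h2] at this
        linarith [this.2]
      have hcge : 2 ≤ c := by
        have : (2:ℝ) ∈ Set.Icc (0:ℝ) 2 := ⟨by norm_num, le_refl _⟩
        rw [h2] at this
        linarith [this.2]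
      have hceq : c = 2 := le_antisymm hcle hcge
      rw [hc, inner_add_right] at hceq
      linarith
    -- image of A' under functionals
    have hA'image : ∀ v : EuclideanSpace ℝ (Fin n), v ∈ V →
        ((inner ℝ v u₁ : ℝ) = 0 ∨ (inner ℝ v u₁ : ℝ) = 1) →
        ((inner ℝ v u₂ : ℝ) = 0 ∨ (inner ℝ v u₂ : ℝ) = 1) →
        ((inner ℝ v u₁ : ℝ) = 1 ∨ (inner ℝ v u₂ : ℝ) = 1) →
        (fun a => (inner ℝ v a : ℝ)) '' A' = {0, 2} := by
      intro v hvV h1 h2 h12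
      have hval : ∀ p ∈ SP, ∀ s ∈ S, (inner ℝ v (p + (2:ℝ) • s) : ℝ) = 2 * inner ℝ v s := by
        intro p hp s hs
        have hp0 : (inner ℝ v p : ℝ) = 0 :=
          (Submodule.mem_orthogonal V p).mp (hSPW hp) v hvV
        rw [inner_add_right, hp0, real_inner_smul_right]
        ring
      apply Set.Subset.antisymm
      · rintro r ⟨a, ⟨p, hp, q, ⟨s, hs, rfl⟩, rfl⟩, rfl⟩
        show (inner ℝ v (p + (2:ℝ) • s) : ℝ) ∈ ({0, 2} : Set ℝ)
        rw [hval p hp s hs]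
        rcases hs with rfl | rfl | rfl
        · left; simp
        · rcases h1 with hx | hx <;> rw [hx]
          · left; ring
          · right; norm_num
        · rcases h2 with hx | hx <;> rw [hx]
          · left; ring
          · right; norm_num
      · rintro r (rfl | rfl)
        · exact ⟨0 + (2:ℝ) • (0:EuclideanSpace ℝ (Fin n)),
            ⟨0, h0SP, (2:ℝ) • (0:EuclideanSpace ℝ (Fin n)), ⟨0, h0S, rfl⟩, rfl⟩,
            by show (inner ℝ v ((0:EuclideanSpace ℝ (Fin n)) + (2:ℝ) • (0:EuclideanSpace ℝ (Fin n))) : ℝ) = 0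
               rw [hval 0 h0SP 0 h0S, inner_zero_right]; ring⟩
        · rcases h12 with hc | hc
          · exact ⟨0 + (2:ℝ) • u₁, ⟨0, h0SP, (2:ℝ) • u₁, ⟨u₁, hu₁S, rfl⟩, rfl⟩,
              by show (inner ℝ v ((0:EuclideanSpace ℝ (Fin n)) + (2:ℝ) • u₁) : ℝ) = 2
                 rw [hval 0 h0SP u₁ hu₁S, hc]; ring⟩
          · exact ⟨0 + (2:ℝ) • u₂, ⟨0, h0SP, (2:ℝ) • u₂, ⟨u₂, hu₂S, rfl⟩, rfl⟩,
              by show (inner ℝ v ((0:EuclideanSpace ℝ (Fin n)) + (2:ℝ) • u₂) : ℝ) = 2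
                 rw [hval 0 h0SP u₂ hu₂S, hc]; ring⟩
    have hIcc : ∀ v : EuclideanSpace ℝ (Fin n),
        ((fun a => (inner ℝ v a : ℝ)) '' A' = {0, 2}) →
        (fun a => (inner ℝ v a : ℝ)) '' (convexHull ℝ A') = Set.Icc 0 2 := by
      intro v hv
      have him := (innerLM v).image_convexHull A'
      rw [show ⇑(innerLM v) = (fun a => (inner ℝ v a : ℝ)) from rfl] at him
      rw [him, hv, convexHull_pair, segment_eq_Icc (by norm_num : (0:ℝ) ≤ 2)]
    have ht1 : (inner ℝ u₁ t : ℝ) = 1 :=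
      key u₁ (hIcc u₁ (hA'image u₁ hu₁V (Or.inr h11) (Or.inl h12) (Or.inl h11)))
    have ht2 : (inner ℝ u₂ t : ℝ) = 1 :=
      key u₂ (hIcc u₂ (hA'image u₂ hu₂V (Or.inl h21) (Or.inr h22) (Or.inr h22)))
    have ht12 : (inner ℝ (u₁ + u₂) t : ℝ) = 1 := by
      apply key (u₁ + u₂)
      apply hIcc
      apply hA'image (u₁ + u₂) (V.add_mem hu₁V hu₂V)
      · right; rw [inner_add_left, h11, h21]; ring
      · right; rw [inner_add_left, h12, h22]; ring
      · left; rw [inner_add_left, h11, h21]; ring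
    rw [inner_add_left, ht1, ht2] at ht12
    norm_num at ht12
  · -- equal width covariograms
    intro x
    set xV : EuclideanSpace ℝ (Fin n) := ↑(V.orthogonalProjectionOnto x) with hxVdef
    set xW : EuclideanSpace ℝ (Fin n) := x - xV with hxWdef
    have hxV : xV ∈ V := (V.orthogonalProjectionOnto x).2
    have hxW : xW ∈ W := V.sub_starProjection_mem_orthogonal x
    have hx : xW + xV = x := by rw [hxWdef]; module
    have hdec1 : convexHull ℝ A ∩ ((· + x) '' convexHull ℝ A)
        = (convexHull ℝ SP ∩ ((· + xW) '' convexHull ℝ SP))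
          + (convexHull ℝ H ∩ ((· + xV) '' convexHull ℝ H)) := by
      rw [← hx, hKdec]
      exact inter_add_decomp V W hVW _ _ hPW hQHV xW xV hxW hxV
    have hdec2 : convexHull ℝ A' ∩ ((· + x) '' convexHull ℝ A')
        = (convexHull ℝ SP ∩ ((· + xW) '' convexHull ℝ SP))
          + (convexHull ℝ ((2:ℝ) • S) ∩ ((· + xV) '' convexHull ℝ ((2:ℝ) • S))) := by
      rw [← hx, hK'dec]
      exact inter_add_decomp V W hVW _ _ hPW hQ2V xW xV hxW hxV
    have hneiff : (convexHull ℝ H ∩ ((· + xV) '' convexHull ℝ H)).Nonempty ↔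
        (convexHull ℝ ((2:ℝ) • S) ∩ ((· + xV) '' convexHull ℝ ((2:ℝ) • S))).Nonempty := by
      rw [inter_translate_nonempty_iff, inter_translate_nonempty_iff, hH, diff_body_eq]
    by_cases hQne : (convexHull ℝ H ∩ ((· + xV) '' convexHull ℝ H)).Nonempty
    · have hQ2ne := hneiff.mp hQne
      have himg1 : (fun a => (inner ℝ a z : ℝ)) ''
          (convexHull ℝ A ∩ ((· + x) '' convexHull ℝ A))
          = (fun a => (inner ℝ a z : ℝ)) ''
            (convexHull ℝ SP ∩ ((· + xW) '' convexHull ℝ SP)) := by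
        rw [hdec1]
        exact image_add_of_ker _ (fun a b => inner_add_left a b z) _ _
          (fun y hy => hzV0 y (hQHV hy.1)) hQne
      have himg2 : (fun a => (inner ℝ a z : ℝ)) ''
          (convexHull ℝ A' ∩ ((· + x) '' convexHull ℝ A'))
          = (fun a => (inner ℝ a z : ℝ)) ''
            (convexHull ℝ SP ∩ ((· + xW) '' convexHull ℝ SP)) := by
        rw [hdec2]
        exact image_add_of_ker _ (fun a b => inner_add_left a b z) _ _
          (fun y hy => hzV0 y (hQ2V hy.1)) hQ2ne
      unfold w
      rw [himg1, himg2]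
    · have hQ2ne : ¬ (convexHull ℝ ((2:ℝ) • S) ∩
          ((· + xV) '' convexHull ℝ ((2:ℝ) • S))).Nonempty := fun h => hQne (hneiff.mpr h)
      rw [Set.not_nonempty_iff_eq_empty] at hQne hQ2ne
      rw [hdec1, hdec2, hQne, hQ2ne, Set.add_empty]
end

section
/- Let K be a convex body in ℝ². Then for Lebesgue-almost every x ∈ ℝ² one has per(K ∩ (K + x)) = μH¹(K ∩ (frontier K + x)) + μH¹(K ∩ (frontier K + (−x))), where μH¹ denotes one-dimensional Hausdorff measure. (Theorem 3.1(I) for the Euclidean perimeter: almost everywhere, the perimeter-covariogram of K equals the sum of the lengths of the two chords of K obtained by translating the boundary by ±x.) -/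
open MeasureTheory Set
open scoped Pointwise

/-- Euclidean perimeter of a planar set: one-dimensional Hausdorff measure of its frontier. -/
noncomputable def per (A : Set (EuclideanSpace ℝ (Fin 2))) : ℝ :=
  (μH[1] (frontier A)).toReal

section Aux

open Real Filter
open scoped RealInnerProductSpace NNReal ENNReal Topology

local notation "E2" => EuclideanSpace ℝ (Fin 2)

section proj
variable {F : Type*} [NormedAddCommGroup F] [InnerProductSpace ℝ F]

/-- Metric projection onto a nonempty compact convex set: it is 1-Lipschitz, lands in `K`,
and any point satisfying the variational inequality is the projection. -/
lemma exists_lipschitz_proj {K : Set F} (hne : K.Nonempty) (hcp : IsCompact K)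
    (hcv : Convex ℝ K) :
    ∃ f : F → F, LipschitzWith 1 f ∧ (∀ x, f x ∈ K) ∧
      (∀ x z, z ∈ K → (∀ w ∈ K, ⟪x - z, w - z⟫ ≤ 0) → f x = z) := by
  have hex := exists_norm_eq_iInf_of_complete_convex hne hcp.isComplete hcv
  choose f hfK hfmin using hex
  have hvar : ∀ x, ∀ w ∈ K, ⟪x - f x, w - f x⟫ ≤ 0 := fun x =>
    (norm_eq_iInf_iff_real_inner_le_zero hcv (hfK x)).1 (hfmin x)
  have huniq : ∀ x z, z ∈ K → (∀ w ∈ K, ⟪x - z, w - z⟫ ≤ 0) → f x = z := by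
    intro x z hz hvz
    have h1 : ⟪x - f x, z - f x⟫ ≤ 0 := hvar x z hz
    have h2 : ⟪x - z, f x - z⟫ ≤ 0 := hvz (f x) (hfK x)
    have key : ⟪f x - z, f x - z⟫ ≤ 0 := by
      have : ⟪x - z, f x - z⟫ - ⟪x - f x, f x - z⟫ = ⟪f x - z, f x - z⟫ := by
        rw [← inner_sub_left]; congr 1; abel
      rw [← this]
      have h1' : -⟪x - f x, f x - z⟫ ≤ 0 := by
        rw [← inner_neg_right]; simpa [neg_sub] using h1
      linarith
    have : f x - z = 0 := by
      have := real_inner_self_nonpos.mp key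
      simpa using this
    have := sub_eq_zero.mp this
    exact this
  refine ⟨f, ?_, hfK, huniq⟩
  apply LipschitzWith.of_dist_le_mul
  intro x y
  rcases eq_or_ne (f x) (f y) with h | h
  · simp [dist_eq_norm, h]
  have h1 : ⟪x - f x, f y - f x⟫ ≤ 0 := hvar x (f y) (hfK y)
  have h2 : ⟪y - f y, f x - f y⟫ ≤ 0 := hvar y (f x) (hfK x)
  have h1' : 0 ≤ ⟪x - f x, f x - f y⟫ := by
    have := neg_nonneg.mpr h1
    rwa [← inner_neg_right, neg_sub] at this
  have key : ‖f x - f y‖ ^ 2 ≤ ⟪x - y, f x - f y⟫ := by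
    have expand : ⟪x - y, f x - f y⟫ - ‖f x - f y‖ ^ 2
        = ⟪x - f x, f x - f y⟫ - ⟪y - f y, f x - f y⟫ := by
      rw [← real_inner_self_eq_norm_sq, ← inner_sub_left, ← inner_sub_left]
      congr 1
      abel
    linarith
  have hc : ⟪x - y, f x - f y⟫ ≤ ‖x - y‖ * ‖f x - f y‖ := real_inner_le_norm _ _
  have hpos : 0 < ‖f x - f y‖ := by
    rw [norm_pos_iff]; exact sub_ne_zero.mpr h
  have : ‖f x - f y‖ ≤ ‖x - y‖ := by nlinarith
  simpa [dist_eq_norm] using this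

end proj

lemma lipschitz_sin : LipschitzWith 1 Real.sin := by
  apply lipschitzWith_of_nnnorm_deriv_le Real.differentiable_sin
  intro x
  rw [Real.deriv_sin, ← NNReal.coe_le_coe, coe_nnnorm, Real.norm_eq_abs, NNReal.coe_one]
  exact Real.abs_cos_le_one x

lemma lipschitz_cos : LipschitzWith 1 Real.cos := by
  apply lipschitzWith_of_nnnorm_deriv_le Real.differentiable_cos
  intro x
  rw [Real.deriv_cos, ← NNReal.coe_le_coe, coe_nnnorm, Real.norm_eq_abs, NNReal.coe_one,
    abs_neg]
  exact Real.abs_sin_le_one x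

lemma sphere_hausdorff_lt_top (c : E2) (R : ℝ) :
    μH[1] (Metric.sphere c R) < ⊤ := by
  rcases le_or_gt R 0 with hR | hR
  · rcases lt_or_eq_of_le hR with h | h
    · simp [Metric.sphere_eq_empty_of_neg h]
    · subst h
      rw [Metric.sphere_zero]
      haveI : NullSingletonClass (μH[1] : Measure E2) := Measure.noAtoms_hausdorff E2 one_pos
      rw [measure_singleton]; simp
  set g : ℝ → E2 := fun t =>
    c + (EuclideanSpace.single (0 : Fin 2) (R * Real.cos t)
      + EuclideanSpace.single (1 : Fin 2) (R * Real.sin t)) with hg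
  have hlip : LipschitzWith (2 * R.toNNReal) g := by
    apply LipschitzWith.of_dist_le_mul
    intro s t
    have hdist : dist (g s) (g t) ≤ R * |Real.cos s - Real.cos t|
        + R * |Real.sin s - Real.sin t| := by
      rw [dist_eq_norm, hg]
      simp only [add_sub_add_left_eq_sub]
      calc ‖EuclideanSpace.single (0:Fin 2) (R * Real.cos s)
              + EuclideanSpace.single (1:Fin 2) (R * Real.sin s)
            - (EuclideanSpace.single (0:Fin 2) (R * Real.cos t)
              + EuclideanSpace.single (1:Fin 2) (R * Real.sin t))‖
          = ‖EuclideanSpace.single (0 : Fin 2) (R * Real.cos s - R * Real.cos t)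
            + EuclideanSpace.single (1 : Fin 2) (R * Real.sin s - R * Real.sin t)‖ := by
            congr 1
            ext i
            fin_cases i <;> simp [EuclideanSpace.single_apply]
        _ ≤ ‖EuclideanSpace.single (0 : Fin 2) (R * Real.cos s - R * Real.cos t)‖
            + ‖EuclideanSpace.single (1 : Fin 2) (R * Real.sin s - R * Real.sin t)‖ :=
            norm_add_le _ _
        _ = |R * Real.cos s - R * Real.cos t| + |R * Real.sin s - R * Real.sin t| := by
            rw [EuclideanSpace.norm_single, EuclideanSpace.norm_single,
              Real.norm_eq_abs, Real.norm_eq_abs]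
        _ = R * |Real.cos s - Real.cos t| + R * |Real.sin s - Real.sin t| := by
            rw [← mul_sub, ← mul_sub, abs_mul, abs_mul, abs_of_pos hR]
    have hcos : |Real.cos s - Real.cos t| ≤ |s - t| := by
      have := lipschitz_cos.dist_le_mul s t
      simpa [Real.dist_eq] using this
    have hsin : |Real.sin s - Real.sin t| ≤ |s - t| := by
      have := lipschitz_sin.dist_le_mul s t
      simpa [Real.dist_eq] using this
    have hco : ((2 * R.toNNReal : ℝ≥0) : ℝ) = 2 * R := by
      simp [Real.coe_toNNReal _ hR.le]
    rw [hco]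
    rw [Real.dist_eq]
    nlinarith [abs_nonneg (s - t), hdist, hcos, hsin]
  have hsurj : Metric.sphere c R ⊆ g '' (Icc (-π) π) := by
    intro p hp
    have hp' : ‖p - c‖ = R := by
      simpa [dist_eq_norm] using (Metric.mem_sphere.mp hp)
    set z : ℂ := ⟨(p - c) 0, (p - c) 1⟩ with hz
    have habs : ‖z‖ = R := by
      rw [Complex.norm_def, Complex.normSq_mk, ← hp', EuclideanSpace.norm_eq]
      congr 1
      simp [Fin.sum_univ_two, pow_two]
    have hzne : z ≠ 0 := by
      intro h; rw [h] at habs; simp at habs; exact hR.ne' habs.symm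
    refine ⟨Complex.arg z, Ioc_subset_Icc_self (Complex.arg_mem_Ioc z), ?_⟩
    have hcos := Complex.cos_arg hzne
    have hsin := Complex.sin_arg z
    rw [habs] at hcos hsin
    have h0 : R * Real.cos (Complex.arg z) = (p - c) 0 := by
      rw [hcos]; field_simp; rfl
    have h1 : R * Real.sin (Complex.arg z) = (p - c) 1 := by
      rw [hsin]; field_simp; rfl
    rw [hg]
    simp only
    have : EuclideanSpace.single (0:Fin 2) (R * Real.cos (Complex.arg z))
        + EuclideanSpace.single (1:Fin 2) (R * Real.sin (Complex.arg z)) = p - c := by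
      ext i
      fin_cases i <;> simp [EuclideanSpace.single_apply, h0, h1]
    rw [this]
    abel
  calc μH[1] (Metric.sphere c R) ≤ μH[1] (g '' (Icc (-π) π)) := measure_mono hsurj
    _ ≤ ((2 * R.toNNReal : ℝ≥0) : ℝ≥0∞) ^ (1:ℝ) * μH[1] (Icc (-π) π) :=
        hlip.hausdorffMeasure_image_le one_pos.le _
    _ < ⊤ := by
        rw [MeasureTheory.hausdorffMeasure_real, Real.volume_Icc]
        have : ((2 * R.toNNReal : ℝ≥0) : ℝ≥0∞) ^ (1:ℝ) ≠ ⊤ := by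
          rw [ENNReal.rpow_one]
          exact ENNReal.coe_ne_top
        exact ENNReal.mul_lt_top (lt_top_iff_ne_top.mpr this) (by simp)

lemma subset_closure_interior_of_convex {F : Type*} [NormedAddCommGroup F]
    [NormedSpace ℝ F] {K : Set F} (hcv : Convex ℝ K) (hint : (interior K).Nonempty) :
    K ⊆ closure (interior K) := by
  obtain ⟨a, ha⟩ := hint
  intro w hw
  have htend : Tendsto (fun n : ℕ => (1/(n+1) : ℝ) • a + (1 - 1/(n+1) : ℝ) • w)
      atTop (𝓝 w) := by
    have h0 : Tendsto (fun n : ℕ => (1/(n+1) : ℝ)) atTop (𝓝 0) :=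
      tendsto_one_div_add_atTop_nhds_zero_nat
    have h1 : Tendsto (fun n : ℕ => ((1:ℝ) - 1/(n+1))) atTop (𝓝 1) := by
      simpa using (tendsto_const_nhds (x := (1:ℝ)) (f := atTop (α := ℕ))).sub h0
    have := (h0.smul_const a).add (h1.smul_const w)
    simpa using this
  apply mem_closure_of_tendsto htend
  filter_upwards with n
  have hn : (0:ℝ) < 1/(n+1) := by positivity
  have hn' : (1/(n+1):ℝ) ≤ 1 := by
    rw [div_le_one (by positivity)]
    linarith [Nat.cast_nonneg (α := ℝ) n]
  exact hcv.combo_interior_self_mem_interior ha hw hn (by linarith) (by ring)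

lemma frontier_subset_proj_image {K : Set E2} (hne : K.Nonempty) (hcp : IsCompact K)
    (hcv : Convex ℝ K) (hint : (interior K).Nonempty)
    {f : E2 → E2}
    (huniq : ∀ x z, z ∈ K → (∀ w ∈ K, ⟪x - z, w - z⟫ ≤ 0) → f x = z)
    {r : ℝ} (hr : K ⊆ Metric.closedBall 0 r) (hr0 : 0 ≤ r) :
    frontier K ⊆ f '' Metric.sphere 0 (r + 1) := by
  intro z hz
  have hzK : z ∈ K := by
    have := hz.1
    rwa [hcp.isClosed.closure_eq] at this
  have hznot : z ∉ interior K := hz.2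
  obtain ⟨g, hg⟩ := geometric_hahn_banach_open_point hcv.interior isOpen_interior hznot
  have hKle : ∀ w ∈ K, g w ≤ g z := by
    intro w hw
    have hC : IsClosed {x : E2 | g x ≤ g z} := isClosed_le g.continuous continuous_const
    have hsub : interior K ⊆ {x : E2 | g x ≤ g z} := fun a ha => (hg a ha).le
    have := subset_closure_interior_of_convex hcv hint hw
    exact (hC.closure_subset_iff.mpr hsub) this
  set v : E2 := (InnerProductSpace.toDual ℝ E2).symm g with hv
  have hinner : ∀ x : E2, ⟪v, x⟫ = g x := fun x => InnerProductSpace.toDual_symm_apply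
  have hvne : v ≠ 0 := by
    obtain ⟨a, ha⟩ := hint
    intro h
    have h1 := hg a ha
    have h2 : g a = ⟪v, a⟫ := (hinner a).symm
    have h3 : g z = ⟪v, z⟫ := (hinner z).symm
    rw [h2, h3, h] at h1
    simp at h1
  set u : E2 := ‖v‖⁻¹ • v with hu
  have hunorm : ‖u‖ = 1 := by
    rw [hu, norm_smul, norm_inv, norm_norm, inv_mul_cancel₀ (norm_ne_zero_iff.mpr hvne)]
  set φ : ℝ → ℝ := fun t => ‖z + t • u‖ with hφ
  have hφc : ContinuousOn φ (Icc 0 (2*r + 2)) := by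
    apply Continuous.continuousOn
    fun_prop
  have hφ0 : φ 0 ≤ r + 1 := by
    have := hr hzK
    rw [Metric.mem_closedBall, dist_zero_right] at this
    simp only [hφ, zero_smul, add_zero]
    linarith
  have hφT : r + 1 ≤ φ (2*r + 2) := by
    have h1 : ‖(2*r+2) • u‖ - ‖z‖ ≤ ‖z + (2*r+2) • u‖ := by
      have h := norm_sub_norm_le ((2*r+2) • u) (-z)
      rw [norm_neg] at h
      have h2 : (2*r+2) • u - (-z) = z + (2*r+2) • u := by abel
      rw [h2] at h
      linarith
    have h2 : ‖(2*r+2) • u‖ = 2*r+2 := by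
      rw [norm_smul, hunorm, Real.norm_eq_abs, abs_of_nonneg (by linarith), mul_one]
    have h3 : ‖z‖ ≤ r := by
      have := hr hzK
      rwa [Metric.mem_closedBall, dist_zero_right] at this
    simp only [hφ]
    linarith
  obtain ⟨t, ht, hφt⟩ := intermediate_value_Icc (by linarith : (0:ℝ) ≤ 2*r+2) hφc
    ⟨hφ0, hφT⟩
  refine ⟨z + t • u, ?_, ?_⟩
  · rw [Metric.mem_sphere, dist_zero_right]
    exact hφt
  · apply huniq _ _ hzK
    intro w hw
    have : z + t • u - z = t • u := by abel
    rw [this, hu, smul_smul, real_inner_smul_left]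
    have hge : (0:ℝ) ≤ t * ‖v‖⁻¹ := mul_nonneg ht.1 (by positivity)
    have : ⟪v, w - z⟫ ≤ 0 := by
      rw [inner_sub_right, hinner, hinner]
      linarith [hKle w hw]
    exact mul_nonpos_of_nonneg_of_nonpos hge this

lemma frontier_hausdorff_lt_top {K : Set E2} (hne : K.Nonempty) (hcp : IsCompact K)
    (hcv : Convex ℝ K) (hint : (interior K).Nonempty) :
    μH[1] (frontier K) < ⊤ := by
  obtain ⟨f, hlip, hfK, huniq⟩ := exists_lipschitz_proj hne hcp hcv
  obtain ⟨r, hr⟩ := hcp.isBounded.subset_closedBall 0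
  have hr' : K ⊆ Metric.closedBall 0 (max r 0) :=
    hr.trans (Metric.closedBall_subset_closedBall (le_max_left _ _))
  have hsub := frontier_subset_proj_image hne hcp hcv hint huniq hr' (le_max_right _ _)
  calc μH[1] (frontier K) ≤ μH[1] (f '' Metric.sphere 0 (max r 0 + 1)) := measure_mono hsub
    _ ≤ ((1:ℝ≥0) : ℝ≥0∞) ^ (1:ℝ) * μH[1] (Metric.sphere 0 (max r 0 + 1)) :=
        hlip.hausdorffMeasure_image_le one_pos.le _
    _ < ⊤ := by simpa using sphere_hausdorff_lt_top 0 (max r 0 + 1)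

lemma translate_image_eq_preimage (s : Set E2) (x : E2) :
    (· + x) '' s = (· - x) ⁻¹' s := by
  ext y
  constructor
  · rintro ⟨k, hk, rfl⟩
    simpa using hk
  · intro hy
    exact ⟨y - x, hy, by simp⟩

lemma ae_null_overlap {K : Set E2} (hcp : IsCompact K) (hcv : Convex ℝ K)
    (hfin : μH[1] (frontier K) < ⊤) :
    ∀ᵐ x ∂(volume : Measure E2), μH[1] (frontier K ∩ ((· + x) '' frontier K)) = 0 := by
  set S := frontier K with hS
  have hSmeas : MeasurableSet S := isClosed_frontier.measurableSet
  set ν : Measure E2 := (μH[1] : Measure E2).restrict S with hν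
  haveI : IsFiniteMeasure ν := by
    constructor
    rw [hν, Measure.restrict_apply_univ]
    exact hfin
  have hmt : ∀ x : E2, MeasurableSet ((· + x) '' S) := by
    intro x
    rw [translate_image_eq_preimage]
    exact hSmeas.preimage (measurable_sub_const x)
  have hF : Measurable (fun p : E2 × E2 => S.indicator (1 : E2 → ℝ≥0∞) (p.2 - p.1)) :=
    (measurable_const.indicator hSmeas).comp (measurable_snd.sub measurable_fst)
  have heqK : ∀ x : E2, μH[1] (S ∩ ((· + x) '' S))
      = ∫⁻ y, S.indicator (1 : E2 → ℝ≥0∞) (y - x) ∂ν := by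
    intro x
    have h1 : ∀ y : E2, S.indicator (1 : E2 → ℝ≥0∞) (y - x)
        = ((· + x) '' S).indicator (1 : E2 → ℝ≥0∞) y := by
      intro y
      rw [translate_image_eq_preimage]
      rfl
    simp_rw [h1]
    rw [lintegral_indicator_one (hmt x), hν, Measure.restrict_apply (hmt x), inter_comm]
  have key : ∫⁻ x, μH[1] (S ∩ ((· + x) '' S)) ∂(volume : Measure E2) = 0 := by
    simp_rw [heqK]
    rw [lintegral_lintegral_swap]
    · have inner_zero : ∀ y : E2,
          ∫⁻ x, S.indicator (1 : E2 → ℝ≥0∞) (y - x) ∂(volume : Measure E2) = 0 := by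
        intro y
        have h2 : ∀ x : E2, S.indicator (1 : E2 → ℝ≥0∞) (y - x)
            = ((fun x => y - x) ⁻¹' S).indicator (1 : E2 → ℝ≥0∞) x := fun x => rfl
        simp_rw [h2]
        have hpre : MeasurableSet ((fun x => y - x) ⁻¹' S) :=
          hSmeas.preimage (by fun_prop)
        rw [lintegral_indicator_one hpre]
        rw [(Measure.measurePreserving_sub_left volume y).measure_preimage
          hSmeas.nullMeasurableSet]
        exact hcv.addHaar_frontier volume
      simp_rw [inner_zero]
      simp
    · exact hF.aemeasurable
  have hmeasf : Measurable fun x => ∫⁻ y, S.indicator (1 : E2 → ℝ≥0∞) (y - x) ∂ν :=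
    Measurable.lintegral_prod_right hF
  have key2 : ∫⁻ x, ∫⁻ y, S.indicator (1 : E2 → ℝ≥0∞) (y - x) ∂ν ∂(volume : Measure E2) = 0 := by
    rw [← key]
    exact lintegral_congr fun x => (heqK x).symm
  refine ((lintegral_eq_zero_iff hmeasf).mp key2).mono fun x hx => ?_
  rw [heqK x]
  exact hx

lemma frontier_inter_measure_eq {A B : Set E2} (hA : IsClosed A) (hB : IsClosed B)
    (hover : μH[1] (frontier A ∩ frontier B) = 0) :
    μH[1] (frontier (A ∩ B)) = μH[1] (A ∩ frontier B) + μH[1] (frontier A ∩ B) := by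
  set μ : Measure E2 := μH[1]
  set E := A ∩ frontier B with hEdef
  set F := frontier A ∩ B with hFdef
  set E' := interior A ∩ frontier B with hE'def
  set F' := frontier A ∩ interior B with hF'def
  have hsub1 : frontier (A ∩ B) ⊆ E ∪ F := by
    intro p hp
    have hpAB : p ∈ A ∩ B := by
      have := hp.1
      rwa [(hA.inter hB).closure_eq] at this
    have hni : p ∉ interior A ∩ interior B := by
      rw [← interior_inter]; exact hp.2
    by_cases h : p ∈ interior A
    · have hnb : p ∉ interior B := fun hb => hni ⟨h, hb⟩
      exact Or.inl ⟨hpAB.1, subset_closure hpAB.2, hnb⟩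
    · exact Or.inr ⟨⟨subset_closure hpAB.1, h⟩, hpAB.2⟩
  have hsub2 : E' ∪ F' ⊆ frontier (A ∩ B) := by
    rintro p (⟨hpa, hpb⟩ | ⟨hpa, hpb⟩)
    · have hpB : p ∈ B := by rw [← hB.closure_eq]; exact hpb.1
      refine ⟨subset_closure ⟨interior_subset hpa, hpB⟩, ?_⟩
      rw [interior_inter]
      exact fun hi => hpb.2 hi.2
    · have hpA : p ∈ A := by rw [← hA.closure_eq]; exact hpa.1
      refine ⟨subset_closure ⟨hpA, interior_subset hpb⟩, ?_⟩
      rw [interior_inter]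
      exact fun hi => hpa.2 hi.1
  have hE : μ E = μ E' := by
    apply le_antisymm
    · have hEsub : E ⊆ E' ∪ (frontier A ∩ frontier B) := by
        intro p hp
        by_cases h : p ∈ interior A
        · exact Or.inl ⟨h, hp.2⟩
        · exact Or.inr ⟨⟨subset_closure hp.1, h⟩, hp.2⟩
      calc μ E ≤ μ (E' ∪ (frontier A ∩ frontier B)) := measure_mono hEsub
        _ ≤ μ E' + μ (frontier A ∩ frontier B) := measure_union_le _ _
        _ = μ E' := by rw [hover, add_zero]
    · exact measure_mono (inter_subset_inter_left _ interior_subset)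
  have hF : μ F = μ F' := by
    apply le_antisymm
    · have hFsub : F ⊆ F' ∪ (frontier A ∩ frontier B) := by
        intro p hp
        by_cases h : p ∈ interior B
        · exact Or.inl ⟨hp.1, h⟩
        · exact Or.inr ⟨hp.1, subset_closure hp.2, h⟩
      calc μ F ≤ μ (F' ∪ (frontier A ∩ frontier B)) := measure_mono hFsub
        _ ≤ μ F' + μ (frontier A ∩ frontier B) := measure_union_le _ _
        _ = μ F' := by rw [hover, add_zero]
    · exact measure_mono (inter_subset_inter_right _ interior_subset)
  have hdisj : Disjoint E' F' := by
    rw [Set.disjoint_left]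
    rintro p ⟨hpa, _⟩ ⟨hqa, _⟩
    exact hqa.2 hpa
  have hadd : μ (E' ∪ F') = μ E' + μ F' :=
    measure_union hdisj (isClosed_frontier.measurableSet.inter
      isOpen_interior.measurableSet)
  have h1 : μ (frontier (A ∩ B)) ≤ μ E + μ F :=
    le_trans (measure_mono hsub1) (measure_union_le E F)
  have h3 : μ E + μ F ≤ μ (frontier (A ∩ B)) := by
    rw [hE, hF, ← hadd]
    exact measure_mono hsub2
  exact le_antisymm h1 h3


end Aux

section Main

open Real Filter
open scoped RealInnerProductSpace NNReal ENNReal Topology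

local notation "E2" => EuclideanSpace ℝ (Fin 2)

/-- For Lebesgue-almost every `x`, the perimeter of `K ∩ (K + x)` equals the sum of the
lengths of the two chords `K ∩ (frontier K + x)` and `K ∩ (frontier K − x)`. -/
theorem perimeter_covariogram_eq_sum_chord_lengths_ae
    (K : Set (EuclideanSpace ℝ (Fin 2)))
    (hKne : K.Nonempty) (hKcp : IsCompact K) (hKcv : Convex ℝ K)
    (hKint : (interior K).Nonempty) :
    ∀ᵐ x ∂(volume : Measure (EuclideanSpace ℝ (Fin 2))),
      per (K ∩ ((· + x) '' K))
        = (μH[1] (K ∩ ((· + x) '' frontier K))).toReal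
          + (μH[1] (K ∩ ((· + (-x)) '' frontier K))).toReal := by
  unfold per
  have hfin := frontier_hausdorff_lt_top hKne hKcp hKcv hKint
  filter_upwards [ae_null_overlap hKcp hKcv hfin] with x hx
  have hiso : Isometry (fun y : E2 => y + x) :=
    Isometry.of_dist_eq fun a b => by simp [dist_eq_norm]
  have hisurj : Function.Surjective (fun y : E2 => y + x) :=
    fun y => ⟨y - x, by simp⟩
  have hHinv : ∀ s : Set E2, μH[1] ((· + x) '' s) = μH[1] s :=
    fun s => hiso.hausdorffMeasure_image (Or.inr hisurj) s
  set B : Set E2 := (· + x) '' K with hBdef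
  have hBclosed : IsClosed B := (hKcp.image (continuous_id.add continuous_const)).isClosed
  have hfrontB : frontier B = (· + x) '' frontier K := by
    have := Homeomorph.image_frontier (Homeomorph.addRight x) K
    simp only [Homeomorph.coe_addRight] at this
    rw [hBdef, ← this]
  have hover : μH[1] (frontier K ∩ frontier B) = 0 := by
    rw [hfrontB]; exact hx
  have hmain := frontier_inter_measure_eq hKcp.isClosed hBclosed hover
  have hfinB : μH[1] (frontier B) < ⊤ := by
    rw [hfrontB, hHinv]; exact hfin
  have hchord2 : μH[1] (K ∩ ((· + (-x)) '' frontier K)) = μH[1] (frontier K ∩ B) := by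
    rw [← hHinv (K ∩ ((· + (-x)) '' frontier K))]
    have himg : (· + x) '' (K ∩ ((· + (-x)) '' frontier K)) = B ∩ frontier K := by
      rw [Set.image_inter (add_left_injective x)]
      congr 1
      rw [← Set.image_comp]
      simp
    rw [himg, inter_comm]
  have ht1 : μH[1] (K ∩ frontier B) ≠ ⊤ :=
    (lt_of_le_of_lt (measure_mono inter_subset_right) hfinB).ne
  have ht2 : μH[1] (frontier K ∩ B) ≠ ⊤ :=
    (lt_of_le_of_lt (measure_mono inter_subset_left) hfin).ne
  rw [hchord2, show (fun x_1 => x_1 + x) '' frontier K = frontier B from hfrontB.symm,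
    hmain, ENNReal.toReal_add ht1 ht2]

end Main
end

section
/- Let K be a convex body in ℝ² and let z ∈ ℝ² be a unit vector. Then the function ℝ² → ℝ given by x ↦ w(K ∩ (K + x), z) is concave on the difference body K − K = {a − b : a, b ∈ K}. (Instance of Theorem 3.1(IV): the per_B-covariogram is concave on DK; here B is the strip with normal z, so per_B is twice the width in direction z.) -/
open MeasureTheory Set
open scoped Pointwise

/-- The width-covariogram of a planar convex body `K` is concave on the
difference body `K − K`. -/
theorem width_covariogram_concaveOn_difference_body
    (K : Set (EuclideanSpace ℝ (Fin 2)))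
    (z : EuclideanSpace ℝ (Fin 2)) (hz : ‖z‖ = 1)
    (hKne : K.Nonempty) (hKcp : IsCompact K) (hKcv : Convex ℝ K)
    (hKint : (interior K).Nonempty) :
    ConcaveOn ℝ (K - K) (fun x => w (K ∩ ((· + x) '' K)) z) := by
  set f : EuclideanSpace ℝ (Fin 2) → ℝ := fun a => (inner ℝ a z : ℝ) with hfdef
  have hf : Continuous f := continuous_id.inner continuous_const
  have hcomp : ∀ x : EuclideanSpace ℝ (Fin 2), IsCompact (K ∩ ((· + x) '' K)) := by
    intro x
    exact hKcp.inter_right (hKcp.image (by continuity)).isClosed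
  have hne : ∀ x ∈ K - K, (K ∩ ((· + x) '' K)).Nonempty := by
    rintro x ⟨p, hp, q, hq, rfl⟩
    exact ⟨p, hp, q, hq, by module⟩
  constructor
  · exact hKcv.sub hKcv
  intro x hx y hy a b ha hb hab
  set A := K ∩ ((· + x) '' K) with hA
  set B := K ∩ ((· + y) '' K) with hB
  set C := K ∩ ((· + (a • x + b • y)) '' K) with hC
  have hsub : ∀ p ∈ A, ∀ q ∈ B, a • p + b • q ∈ C := by
    rintro p ⟨hpK, p', hp', rfl⟩ q ⟨hqK, q', hq', rfl⟩
    refine ⟨hKcv hpK hqK ha hb hab, a • p' + b • q', hKcv hp' hq' ha hb hab, ?_⟩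
    simp only [smul_add]
    abel
  -- extremal points on A and B
  obtain ⟨pA, hpA, hpAmax⟩ := (hcomp x).exists_isMaxOn (hne x hx) hf.continuousOn
  obtain ⟨mA, hmA, hmAmin⟩ := (hcomp x).exists_isMinOn (hne x hx) hf.continuousOn
  obtain ⟨pB, hpB, hpBmax⟩ := (hcomp y).exists_isMaxOn (hne y hy) hf.continuousOn
  obtain ⟨mB, hmB, hmBmin⟩ := (hcomp y).exists_isMinOn (hne y hy) hf.continuousOn
  have hsupA : sSup (f '' A) = f pA :=
    IsGreatest.csSup_eq ⟨mem_image_of_mem _ hpA, by rintro _ ⟨u, hu, rfl⟩; exact hpAmax hu⟩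
  have hinfA : sInf (f '' A) = f mA :=
    IsLeast.csInf_eq ⟨mem_image_of_mem _ hmA, by rintro _ ⟨u, hu, rfl⟩; exact hmAmin hu⟩
  have hsupB : sSup (f '' B) = f pB :=
    IsGreatest.csSup_eq ⟨mem_image_of_mem _ hpB, by rintro _ ⟨u, hu, rfl⟩; exact hpBmax hu⟩
  have hinfB : sInf (f '' B) = f mB :=
    IsLeast.csInf_eq ⟨mem_image_of_mem _ hmB, by rintro _ ⟨u, hu, rfl⟩; exact hmBmin hu⟩
  have hCbddA : BddAbove (f '' C) := ((hcomp _).image hf).bddAbove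
  have hCbddB : BddBelow (f '' C) := ((hcomp _).image hf).bddBelow
  have hpC : f (a • pA + b • pB) ≤ sSup (f '' C) :=
    le_csSup hCbddA (mem_image_of_mem _ (hsub pA hpA pB hpB))
  have hmC : sInf (f '' C) ≤ f (a • mA + b • mB) :=
    csInf_le hCbddB (mem_image_of_mem _ (hsub mA hmA mB hmB))
  have hfl : ∀ p q : EuclideanSpace ℝ (Fin 2), f (a • p + b • q) = a * f p + b * f q := by
    intro p q
    simp [hfdef, inner_add_left, real_inner_smul_left]
  rw [hfl] at hpC hmC
  simp only [w, smul_eq_mul, hsupA, hinfA, hsupB, hinfB]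
  nlinarith [hpC, hmC]
end

section
/- Let F and G be nonempty compact convex subsets of ℝⁿ with F − F = G − G, and let K = conv(F ∪ G). Then K − K = conv((F − G) ∪ (G − F) ∪ (F − F)), where for sets A, B we write A − B = {a − b : a ∈ A, b ∈ B}. (Decomposition of the difference body of a prismatoid with translation-congruent difference sets of its bases, equation (6.2).) -/
open Set
open scoped Pointwise

/-- Decomposition of the difference body of `K = conv(F ∪ G)` when `F − F = G − G`:
`K − K = conv((F − G) ∪ (G − F) ∪ (F − F))`. -/
theorem difference_body_convexHull_union
    (n : ℕ) (F G : Set (EuclideanSpace ℝ (Fin n)))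
    (hFne : F.Nonempty) (hFcp : IsCompact F) (hFcv : Convex ℝ F)
    (hGne : G.Nonempty) (hGcp : IsCompact G) (hGcv : Convex ℝ G)
    (hFG : F - F = G - G) :
    convexHull ℝ (F ∪ G) - convexHull ℝ (F ∪ G)
      = convexHull ℝ ((F - G) ∪ (G - F) ∪ (F - F)) := by
  rw [← convexHull_sub]
  congr 1
  rw [Set.union_sub, Set.sub_union, Set.sub_union, ← hFG]
  ext x
  simp only [Set.mem_union]
  tauto
end

section
/- Let z ∈ ℝⁿ be a unit vector, let a > b be real numbers, and let F, G be nonempty compact convex subsets of ℝⁿ with F ⊆ {x : ⟪x,z⟫ = a}, G ⊆ {x : ⟪x,z⟫ = b}, and F − F = G − G. Let K = conv(F ∪ G). Then for every x ∈ K − K one has w(K ∩ (K + x), z) = (a − b) − |⟪x, z⟫|. (Theorem 6.3(I): the width-covariogram of such a z-prismatoid is completely determined by its width and the inner product with z.) -/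
open MeasureTheory Set
open scoped Pointwise

private lemma combo3 {E : Type*} [AddCommGroup E] [Module ℝ E] {C : Set E} (hC : Convex ℝ C)
    {p q r : E} (hp : p ∈ C) (hq : q ∈ C) (hr : r ∈ C) {α β γ : ℝ}
    (hα : 0 ≤ α) (hβ : 0 ≤ β) (hγ : 0 ≤ γ) (h : α + β + γ = 1) :
    α • p + β • q + γ • r ∈ C := by
  rcases eq_or_lt_of_le (add_nonneg hα hβ) with h0 | h0
  · have hα0 : α = 0 := by linarith [hα, hβ]
    have hβ0 : β = 0 := by linarith
    have hγ1 : γ = 1 := by linarith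
    simpa [hα0, hβ0, hγ1] using hr
  · have hm : (α / (α + β)) • p + (β / (α + β)) • q ∈ C :=
      hC hp hq (div_nonneg hα h0.le) (div_nonneg hβ h0.le) (by field_simp)
    have := hC hm hr (add_nonneg hα hβ) hγ h
    have heq : (α + β) • ((α / (α + β)) • p + (β / (α + β)) • q) + γ • r
        = α • p + β • q + γ • r := by
      rw [smul_add, smul_smul, smul_smul]
      rw [mul_div_cancel₀ _ h0.ne', mul_div_cancel₀ _ h0.ne']
    rwa [heq] at this

/-- The width-covariogram of a `z`-prismatoid `K = conv(F ∪ G)` whose bases have equal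
difference sets: for every `x ∈ K − K`, `w(K ∩ (K + x), z) = (a − b) − |⟪x, z⟫|`. -/
theorem width_covariogram_of_prismatoid
    (n : ℕ) (z : EuclideanSpace ℝ (Fin n)) (hz : ‖z‖ = 1)
    (a b : ℝ) (hab : b < a)
    (F G : Set (EuclideanSpace ℝ (Fin n)))
    (hFne : F.Nonempty) (hFcp : IsCompact F) (hFcv : Convex ℝ F)
    (hGne : G.Nonempty) (hGcp : IsCompact G) (hGcv : Convex ℝ G)
    (hFz : F ⊆ {x | (inner ℝ x z : ℝ) = a})
    (hGz : G ⊆ {x | (inner ℝ x z : ℝ) = b})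
    (hFG : F - F = G - G) :
    ∀ x ∈ convexHull ℝ (F ∪ G) - convexHull ℝ (F ∪ G),
      w (convexHull ℝ (F ∪ G) ∩ ((· + x) '' convexHull ℝ (F ∪ G))) z
        = (a - b) - |(inner ℝ x z : ℝ)| := by
  set K := convexHull ℝ (F ∪ G) with hK
  have hFK : F ⊆ K := (subset_union_left).trans (subset_convexHull ℝ _)
  have hGK : G ⊆ K := (subset_union_right).trans (subset_convexHull ℝ _)
  have hKcv : Convex ℝ K := convex_convexHull ℝ _
  -- representation of points of K
  have hKrep : ∀ k ∈ K, ∃ l, l ∈ Icc (0:ℝ) 1 ∧ ∃ f ∈ F, ∃ g ∈ G,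
      l • f + (1 - l) • g = k := by
    intro k hk
    rw [hK, hFcv.convexHull_union hGcv hFne hGne, mem_convexJoin] at hk
    obtain ⟨f, hf, g, hg, α, β, hα, hβ, hαβ, hfg⟩ := hk
    exact ⟨α, ⟨hα, by linarith⟩, f, hf, g, hg, by rw [show (1:ℝ) - α = β by linarith, hfg]⟩
  -- height computation
  have hinner : ∀ (l : ℝ) f g, f ∈ F → g ∈ G →
      (inner ℝ (l • f + (1 - l) • g) z : ℝ) = l * a + (1 - l) * b := by
    intro l f g hf hg
    rw [inner_add_left, real_inner_smul_left, real_inner_smul_left, hFz hf, hGz hg]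
  have hub : ∀ k ∈ K, (inner ℝ k z : ℝ) ≤ a := by
    intro k hk
    obtain ⟨l, ⟨hl0, hl1⟩, f, hf, g, hg, rfl⟩ := hKrep k hk
    rw [hinner l f g hf hg]; nlinarith
  have hlb : ∀ k ∈ K, b ≤ (inner ℝ k z : ℝ) := by
    intro k hk
    obtain ⟨l, ⟨hl0, hl1⟩, f, hf, g, hg, rfl⟩ := hKrep k hk
    rw [hinner l f g hf hg]; nlinarith
  -- key lemma
  have key : ∀ x, x ∈ K - K → 0 ≤ (inner ℝ x z : ℝ) →
      (∃ f ∈ F, f - x ∈ K) ∧ (∃ g ∈ G, g + x ∈ K) := by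
    intro x hx ht
    rw [mem_sub] at hx
    obtain ⟨k₁, hk₁, k₂, hk₂, hx⟩ := hx
    obtain ⟨l₁, ⟨hl₁0, hl₁1⟩, f₁, hf₁, g₁, hg₁, hk₁e⟩ := hKrep k₁ hk₁
    obtain ⟨l₂, ⟨hl₂0, hl₂1⟩, f₂, hf₂, g₂, hg₂, hk₂e⟩ := hKrep k₂ hk₂
    have hte : (inner ℝ x z : ℝ) = (l₁ - l₂) * (a - b) := by
      rw [← hx, inner_sub_left, ← hk₁e, ← hk₂e, hinner l₁ f₁ g₁ hf₁ hg₁,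
        hinner l₂ f₂ g₂ hf₂ hg₂]; ring
    have hs : 0 ≤ l₁ - l₂ := by
      rw [hte] at ht; nlinarith
    -- g₁ - g₂ ∈ F - F
    have h1 : g₁ - g₂ ∈ F - F := by rw [hFG]; exact sub_mem_sub hg₁ hg₂
    rw [mem_sub] at h1
    obtain ⟨f₃, hf₃, f₄, hf₄, h34⟩ := h1
    have h2 : f₁ - f₂ ∈ G - G := by rw [← hFG]; exact sub_mem_sub hf₁ hf₂
    rw [mem_sub] at h2
    obtain ⟨g₃, hg₃, g₄, hg₄, h34'⟩ := h2
    have hf₃e : f₃ = g₁ - g₂ + f₄ := by rw [← h34]; abel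
    have hg₃e : g₃ = f₁ - f₂ + g₄ := by rw [← h34']; abel
    constructor
    · refine ⟨l₁ • f₁ + (1 - l₁) • f₃, hFcv hf₁ hf₃ hl₁0 (by linarith) (by ring), ?_⟩
      have heq : l₁ • f₁ + (1 - l₁) • f₃ - x
          = l₂ • f₂ + (1 - l₁) • f₄ + (l₁ - l₂) • g₂ := by
        rw [← hx, ← hk₁e, ← hk₂e, hf₃e]; module
      rw [heq]
      exact combo3 hKcv (hFK hf₂) (hFK hf₄) (hGK hg₂) hl₂0 (by linarith) hs (by ring)
    · refine ⟨l₂ • g₄ + (1 - l₂) • g₂, hGcv hg₄ hg₂ hl₂0 (by linarith) (by ring), ?_⟩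
      have heq : l₂ • g₄ + (1 - l₂) • g₂ + x
          = l₂ • g₃ + (1 - l₁) • g₁ + (l₁ - l₂) • f₁ := by
        rw [← hx, ← hk₁e, ← hk₂e, hg₃e]; module
      rw [heq]
      exact combo3 hKcv (hGK hg₃) (hGK hg₁) (hFK hf₁) hl₂0 (by linarith) hs (by ring)
  -- main argument
  intro x hx
  set t : ℝ := inner ℝ x z with htdef
  set S : Set ℝ := (fun a => (inner ℝ a z : ℝ)) '' (K ∩ ((· + x) '' K)) with hS
  rcases le_or_gt 0 t with ht | ht
  · obtain ⟨⟨f, hf, hfK⟩, ⟨g, hg, hgK⟩⟩ := key x hx ht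
    have hgreat : IsGreatest S a := by
      constructor
      · exact ⟨f, ⟨hFK hf, ⟨f - x, hfK, by simp⟩⟩, hFz hf⟩
      · rintro y ⟨p, ⟨hpK, _⟩, rfl⟩
        exact hub p hpK
    have hleast : IsLeast S (b + t) := by
      constructor
      · refine ⟨g + x, ⟨hgK, ⟨g, hGK hg, rfl⟩⟩, ?_⟩
        show (inner ℝ (g + x) z : ℝ) = b + t
        rw [inner_add_left, hGz hg]
      · rintro y ⟨p, ⟨_, ⟨q, hqK, rfl⟩⟩, rfl⟩
        simp only [inner_add_left]
        have := hlb q hqK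
        linarith
    rw [w, ← hS, hgreat.csSup_eq, hleast.csInf_eq, abs_of_nonneg ht]
    ring
  · have hx' : -x ∈ K - K := by
      rw [mem_sub] at hx ⊢
      obtain ⟨k₁, hk₁, k₂, hk₂, hxe⟩ := hx
      exact ⟨k₂, hk₂, k₁, hk₁, by rw [← hxe]; abel⟩
    have ht' : 0 ≤ (inner ℝ (-x) z : ℝ) := by
      rw [inner_neg_left]; linarith
    obtain ⟨⟨f, hf, hfK⟩, ⟨g, hg, hgK⟩⟩ := key (-x) hx' ht'
    rw [sub_neg_eq_add] at hfK
    rw [← sub_eq_add_neg] at hgK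
    have hgreat : IsGreatest S (a + t) := by
      constructor
      · refine ⟨f + x, ⟨hfK, ⟨f, hFK hf, rfl⟩⟩, ?_⟩
        show (inner ℝ (f + x) z : ℝ) = a + t
        rw [inner_add_left, hFz hf]
      · rintro y ⟨p, ⟨_, ⟨q, hqK, rfl⟩⟩, rfl⟩
        simp only [inner_add_left]
        have := hub q hqK
        linarith
    have hleast : IsLeast S b := by
      constructor
      · exact ⟨g, ⟨hGK hg, ⟨g - x, hgK, by simp⟩⟩, hGz hg⟩
      · rintro y ⟨p, ⟨hpK, _⟩, rfl⟩
        exact hlb p hpK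
    rw [w, ← hS, hgreat.csSup_eq, hleast.csInf_eq, abs_of_neg ht]
    ring
end

section
/- Let E = ℝ^ℓ × ℝ^m be the product of Euclidean spaces (with the product inner-product structure), and let φ : Set E → ℝ be invariant under every surjective isometry of E, i.e. φ(T '' A) = φ(A) for every isometric bijection T : E → E and every A ⊆ E. Let K be a convex body in ℝ^ℓ and H a convex body in ℝ^m. Then for every x ∈ ℝ^ℓ and y ∈ ℝ^m: φ((K ×ˢ H) ∩ ((K ×ˢ H) + (x,y))) = φ((K ×ˢ (−H)) ∩ ((K ×ˢ (−H)) + (x,y))). (Theorem 6.1(I): the only property of the valuation φ used is its invariance under isometries of E.) -/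
open Set
open scoped Pointwise

/-- The Cartesian product of a set `K ⊆ ℝ^ℓ` and `H ⊆ ℝ^m`, viewed as a subset of the
product Euclidean space `WithLp 2 (ℝ^ℓ × ℝ^m)` (the product inner-product structure). -/
noncomputable def prodW {l m : ℕ} (K : Set (EuclideanSpace ℝ (Fin l)))
    (H : Set (EuclideanSpace ℝ (Fin m))) :
    Set (WithLp 2 (EuclideanSpace ℝ (Fin l) × EuclideanSpace ℝ (Fin m))) :=
  (WithLp.equiv 2 (EuclideanSpace ℝ (Fin l) × EuclideanSpace ℝ (Fin m))).symm '' (K ×ˢ H)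

lemma mem_prodW {l m : ℕ} {K : Set (EuclideanSpace ℝ (Fin l))}
    {H : Set (EuclideanSpace ℝ (Fin m))}
    {z : WithLp 2 (EuclideanSpace ℝ (Fin l) × EuclideanSpace ℝ (Fin m))} :
    z ∈ prodW K H ↔ z.fst ∈ K ∧ z.snd ∈ H := by
  constructor
  · rintro ⟨⟨a, b⟩, ⟨ha, hb⟩, rfl⟩; exact ⟨ha, hb⟩
  · rintro ⟨h1, h2⟩; exact ⟨(z.fst, z.snd), ⟨h1, h2⟩, rfl⟩

lemma mem_translate {E : Type*} [AddGroup E] {t : E} {S : Set E} {z : E} :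
    z ∈ (· + t) '' S ↔ z - t ∈ S := by
  constructor
  · rintro ⟨v, hv, rfl⟩; simpa using hv
  · intro h; exact ⟨z - t, h, by simp⟩

noncomputable def flipT {l m : ℕ} (y : EuclideanSpace ℝ (Fin m)) :
    WithLp 2 (EuclideanSpace ℝ (Fin l) × EuclideanSpace ℝ (Fin m)) ≃ᵢ
      WithLp 2 (EuclideanSpace ℝ (Fin l) × EuclideanSpace ℝ (Fin m)) where
  toFun z := (WithLp.equiv 2 _).symm (z.fst, y - z.snd)
  invFun z := (WithLp.equiv 2 _).symm (z.fst, y - z.snd)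
  left_inv z := by
    show (WithLp.equiv 2 _).symm ((z.fst : EuclideanSpace ℝ (Fin l)), y - (y - z.snd)) = z
    simp; rfl
  right_inv z := by
    show (WithLp.equiv 2 _).symm ((z.fst : EuclideanSpace ℝ (Fin l)), y - (y - z.snd)) = z
    simp; rfl
  isometry_toFun z w := by
    have h : (0:ℝ) < (2 : ENNReal).toReal := by norm_num
    rw [show (edist ((WithLp.equiv 2 _).symm (z.fst, y - z.snd))
        ((WithLp.equiv 2 _).symm (w.fst, y - w.snd))) =
        (edist z.fst w.fst ^ (2:ENNReal).toReal + edist (y - z.snd) (y - w.snd) ^ (2:ENNReal).toReal)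
          ^ (1 / (2:ENNReal).toReal) from WithLp.prod_edist_eq_add h _ _,
      WithLp.prod_edist_eq_add h]
    simp [edist_sub_left]

/-- Theorem 6.1(I): if `φ` is invariant under all isometric bijections of the product
Euclidean space `E = ℝ^ℓ × ℝ^m`, then the `φ`-covariograms of `K × H` and `K × (−H)`
coincide. -/
theorem covariogram_prod_neg_of_isometry_invariant
    (l m : ℕ)
    (φ : Set (WithLp 2 (EuclideanSpace ℝ (Fin l) × EuclideanSpace ℝ (Fin m))) → ℝ)
    (hφ : ∀ (T : WithLp 2 (EuclideanSpace ℝ (Fin l) × EuclideanSpace ℝ (Fin m)) ≃ᵢ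
              WithLp 2 (EuclideanSpace ℝ (Fin l) × EuclideanSpace ℝ (Fin m)))
          (A : Set (WithLp 2 (EuclideanSpace ℝ (Fin l) × EuclideanSpace ℝ (Fin m)))),
          φ (T '' A) = φ A)
    (K : Set (EuclideanSpace ℝ (Fin l)))
    (hKne : K.Nonempty) (hKcp : IsCompact K) (hKcv : Convex ℝ K)
    (hKint : (interior K).Nonempty)
    (H : Set (EuclideanSpace ℝ (Fin m)))
    (hHne : H.Nonempty) (hHcp : IsCompact H) (hHcv : Convex ℝ H)
    (hHint : (interior H).Nonempty)
    (x : EuclideanSpace ℝ (Fin l)) (y : EuclideanSpace ℝ (Fin m)) :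
    φ (prodW K H ∩
        ((· + (WithLp.equiv 2 (EuclideanSpace ℝ (Fin l) × EuclideanSpace ℝ (Fin m))).symm (x, y))
          '' prodW K H))
      = φ (prodW K (-H) ∩
        ((· + (WithLp.equiv 2 (EuclideanSpace ℝ (Fin l) × EuclideanSpace ℝ (Fin m))).symm (x, y))
          '' prodW K (-H))) := by
  set t := (WithLp.equiv 2 (EuclideanSpace ℝ (Fin l) × EuclideanSpace ℝ (Fin m))).symm (x, y)
  have key : (flipT (l := l) y) '' (prodW K H ∩ ((· + t) '' prodW K H))
      = prodW K (-H) ∩ ((· + t) '' prodW K (-H)) := by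
    have hff : ∀ z, (flipT (l := l) y) ((flipT (l := l) y) z) = z := by
      intro z
      show (WithLp.equiv 2 _).symm ((z.fst : EuclideanSpace ℝ (Fin l)), y - (y - z.snd)) = z
      simp; rfl
    have himg : ∀ A, (flipT (l := l) y) '' A = (flipT (l := l) y) ⁻¹' A := by
      intro A
      ext z
      constructor
      · rintro ⟨w, hw, rfl⟩
        simpa [mem_preimage, hff] using hw
      · intro h
        exact ⟨(flipT (l := l) y) z, h, hff z⟩
    rw [himg]
    ext z
    simp only [mem_preimage, mem_inter_iff, mem_translate, mem_prodW, Set.mem_neg]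
    have e1 : ((flipT (l := l) y) z).fst = z.fst := rfl
    have e2 : ((flipT (l := l) y) z).snd = y - z.snd := rfl
    have e3 : ((flipT (l := l) y) z - t).fst = z.fst - x := rfl
    have e4 : ((flipT (l := l) y) z - t).snd = y - z.snd - y := rfl
    have e5 : (z - t).fst = z.fst - x := rfl
    have e6 : (z - t).snd = z.snd - y := rfl
    rw [e1, e2, e3, e4, e5, e6]
    have h1 : y - z.snd - y = -z.snd := by abel
    have h2 : -(z.snd - y) = y - z.snd := by abel
    rw [h1, h2]
    tauto
  rw [← key, hφ]
end

section
/- Let n ≥ 4 and let φ : Set ℝⁿ → ℝ be invariant under every surjective isometry of ℝⁿ, i.e. φ(T '' A) = φ(A) for every isometric bijection T : ℝⁿ → ℝⁿ and every A ⊆ ℝⁿ. Then there exist convex bodies A, A' ⊆ ℝⁿ such that φ(A ∩ (A + x)) = φ(A' ∩ (A' + x)) for every x ∈ ℝⁿ, while A' is neither a translate nor a reflected translate of A: for every t ∈ ℝⁿ, A' ≠ A + t and A' ≠ (−A) + t. (Theorem 6.1(II): nondetermination by the φ-covariogram in every dimension n ≥ 4.) -/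
open Set
open scoped Pointwise

namespace CovariogramAux

variable {n : ℕ}

/-- The test body: standard triangle in coordinates 0,1; triangle scaled by the sign `s`
in coordinates 2,3; unit box in the remaining coordinates. -/
def body (n : ℕ) (hn : 4 ≤ n) (s : ℝ) : Set (EuclideanSpace ℝ (Fin n)) :=
  {p | 0 ≤ p ⟨0, by omega⟩ ∧ 0 ≤ p ⟨1, by omega⟩ ∧ p ⟨0, by omega⟩ + p ⟨1, by omega⟩ ≤ 1 ∧
       0 ≤ s * p ⟨2, by omega⟩ ∧ 0 ≤ s * p ⟨3, by omega⟩ ∧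
       s * p ⟨2, by omega⟩ + s * p ⟨3, by omega⟩ ≤ 1 ∧
       ∀ i : Fin n, 4 ≤ (i : ℕ) → 0 ≤ p i ∧ p i ≤ 1}

lemma mem_body (hn : 4 ≤ n) (s : ℝ) (p : EuclideanSpace ℝ (Fin n)) :
    p ∈ body n hn s ↔
      (0 ≤ p ⟨0, by omega⟩ ∧ 0 ≤ p ⟨1, by omega⟩ ∧ p ⟨0, by omega⟩ + p ⟨1, by omega⟩ ≤ 1 ∧
       0 ≤ s * p ⟨2, by omega⟩ ∧ 0 ≤ s * p ⟨3, by omega⟩ ∧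
       s * p ⟨2, by omega⟩ + s * p ⟨3, by omega⟩ ≤ 1 ∧
       ∀ i : Fin n, 4 ≤ (i : ℕ) → 0 ≤ p i ∧ p i ≤ 1) := Iff.rfl

lemma body_nonempty (hn : 4 ≤ n) (s : ℝ) : (body n hn s).Nonempty := by
  refine ⟨0, ?_⟩
  simp [mem_body]

lemma body_convex (hn : 4 ≤ n) (s : ℝ) : Convex ℝ (body n hn s) := by
  intro p hp q hq a b ha hb hab
  rw [mem_body] at hp hq ⊢
  obtain ⟨h1, h2, h3, h4, h5, h6, h7⟩ := hp
  obtain ⟨g1, g2, g3, g4, g5, g6, g7⟩ := hq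
  simp only [PiLp.add_apply, PiLp.smul_apply, smul_eq_mul]
  refine ⟨by nlinarith, by nlinarith, by nlinarith, by nlinarith, by nlinarith, by nlinarith, ?_⟩
  intro i hi
  obtain ⟨hi1, hi2⟩ := h7 i hi
  obtain ⟨gi1, gi2⟩ := g7 i hi
  constructor <;> nlinarith

lemma abs_coord_le_norm (p : EuclideanSpace ℝ (Fin n)) (i : Fin n) : |p i| ≤ ‖p‖ := by
  rw [EuclideanSpace.norm_eq,
    show |p i| = Real.sqrt (‖p i‖^2) by rw [Real.sqrt_sq_eq_abs]; simp]
  exact Real.sqrt_le_sqrt <|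
    Finset.single_le_sum (f := fun j => ‖p j‖^2) (fun j _ => sq_nonneg _) (Finset.mem_univ i)

lemma body_coord_bound (hn : 4 ≤ n) {s : ℝ} (hs : s = 1 ∨ s = -1)
    {p : EuclideanSpace ℝ (Fin n)} (hp : p ∈ body n hn s) (i : Fin n) : |p i| ≤ 1 := by
  rw [mem_body] at hp
  obtain ⟨h1, h2, h3, h4, h5, h6, h7⟩ := hp
  rcases lt_or_ge (i : ℕ) 4 with h4' | h4'
  · have : (i:ℕ) = 0 ∨ (i:ℕ) = 1 ∨ (i:ℕ) = 2 ∨ (i:ℕ) = 3 := by omega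
    rcases this with h | h | h | h <;>
      [(have hi : i = ⟨0, Nat.lt_of_lt_of_le (by norm_num) hn⟩ := Fin.ext h);
       (have hi : i = ⟨1, Nat.lt_of_lt_of_le (by norm_num) hn⟩ := Fin.ext h);
       (have hi : i = ⟨2, Nat.lt_of_lt_of_le (by norm_num) hn⟩ := Fin.ext h);
       (have hi : i = ⟨3, Nat.lt_of_lt_of_le (by norm_num) hn⟩ := Fin.ext h)] <;>
      subst hi <;>
      rcases hs with rfl | rfl <;>
      rw [abs_le] <;>
      constructor <;>
      linarith
  · obtain ⟨hi1, hi2⟩ := h7 i h4'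
    rw [abs_le]; exact ⟨by linarith, hi2⟩

lemma body_isClosed (hn : 4 ≤ n) (s : ℝ) : IsClosed (body n hn s) := by
  have : body n hn s =
      {p : EuclideanSpace ℝ (Fin n) | 0 ≤ p ⟨0, by omega⟩} ∩
      ({p | 0 ≤ p ⟨1, by omega⟩} ∩
      ({p | p ⟨0, by omega⟩ + p ⟨1, by omega⟩ ≤ 1} ∩
      ({p | 0 ≤ s * p ⟨2, by omega⟩} ∩
      ({p | 0 ≤ s * p ⟨3, by omega⟩} ∩
      ({p | s * p ⟨2, by omega⟩ + s * p ⟨3, by omega⟩ ≤ 1} ∩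
      (⋂ i : Fin n, {p | 4 ≤ (i : ℕ) → 0 ≤ p i ∧ p i ≤ 1})))))) := by
    ext p
    simp only [body, mem_setOf_eq, mem_inter_iff, mem_iInter]
  rw [this]
  have cont : ∀ i : Fin n, Continuous (fun p : EuclideanSpace ℝ (Fin n) => p i) :=
    fun i => (EuclideanSpace.proj i).continuous
  refine (isClosed_le continuous_const (cont _)).inter
    ((isClosed_le continuous_const (cont _)).inter
    ((isClosed_le ((cont _).add (cont _)) continuous_const).inter
    ((isClosed_le continuous_const (continuous_const.mul (cont _))).inter
    ((isClosed_le continuous_const (continuous_const.mul (cont _))).inter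
    ((isClosed_le ((continuous_const.mul (cont _)).add (continuous_const.mul (cont _)))
        continuous_const).inter
    (isClosed_iInter fun i => ?_))))))
  by_cases h : 4 ≤ (i : ℕ)
  · have : {p : EuclideanSpace ℝ (Fin n) | 4 ≤ (i : ℕ) → 0 ≤ p i ∧ p i ≤ 1} =
        {p | 0 ≤ p i} ∩ {p | p i ≤ 1} := by
      ext p; simp [h]
    rw [this]
    exact (isClosed_le continuous_const (cont _)).inter
      (isClosed_le (cont _) continuous_const)
  · have : {p : EuclideanSpace ℝ (Fin n) | 4 ≤ (i : ℕ) → 0 ≤ p i ∧ p i ≤ 1} = univ := by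
      ext p; simp [h]
    rw [this]; exact isClosed_univ

lemma body_isCompact (hn : 4 ≤ n) {s : ℝ} (hs : s = 1 ∨ s = -1) :
    IsCompact (body n hn s) := by
  refine (isCompact_closedBall (0 : EuclideanSpace ℝ (Fin n)) (Real.sqrt n)).of_isClosed_subset
    (body_isClosed hn s) fun p hp => ?_
  rw [Metric.mem_closedBall, dist_zero_right, EuclideanSpace.norm_eq]
  refine Real.sqrt_le_sqrt ?_
  calc (∑ i, ‖p i‖^2) ≤ ∑ _i : Fin n, (1:ℝ) := by
        refine Finset.sum_le_sum fun i _ => ?_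
        have := body_coord_bound hn hs hp i
        rw [Real.norm_eq_abs]
        nlinarith [abs_nonneg (p i)]
    _ = n := by simp

noncomputable def ctr (n : ℕ) (s : ℝ) : EuclideanSpace ℝ (Fin n) :=
  WithLp.toLp 2 (fun i : Fin n => if (i : ℕ) = 2 ∨ (i : ℕ) = 3 then s/4 else (1/4 : ℝ))

lemma ctr_apply (s : ℝ) (i : Fin n) :
    ctr n s i = if (i : ℕ) = 2 ∨ (i : ℕ) = 3 then s/4 else (1/4 : ℝ) := rfl

set_option maxHeartbeats 2000000 in
lemma body_interior_nonempty (hn : 4 ≤ n) {s : ℝ} (hs : s = 1 ∨ s = -1) :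
    (interior (body n hn s)).Nonempty := by
  classical
  set c : EuclideanSpace ℝ (Fin n) := ctr n s with hcdef
  have hca : ∀ i : Fin n, c i = if (i : ℕ) = 2 ∨ (i : ℕ) = 3 then s/4 else (1/4 : ℝ) :=
    fun i => ctr_apply s i
  refine ⟨c, mem_interior.mpr ⟨Metric.ball c (1/8), ?_, Metric.isOpen_ball,
    Metric.mem_ball_self (by norm_num)⟩⟩
  intro p hp
  have hco : ∀ i : Fin n, |p i - c i| < 1/8 := by
    intro i
    calc |p i - c i| = |(p - c) i| := by simp [PiLp.sub_apply]
      _ ≤ ‖p - c‖ := abs_coord_le_norm _ i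
      _ = dist p c := (dist_eq_norm p c).symm
      _ < 1/8 := hp
  have e0 : c ⟨0, by omega⟩ = 1/4 := by rw [hca]; norm_num
  have e1 : c ⟨1, by omega⟩ = 1/4 := by rw [hca]; norm_num
  have e2 : c ⟨2, by omega⟩ = s/4 := by rw [hca]; norm_num
  have e3 : c ⟨3, by omega⟩ = s/4 := by rw [hca]; norm_num
  have b0 := hco ⟨0, by omega⟩; rw [e0] at b0
  have b1 := hco ⟨1, by omega⟩; rw [e1] at b1
  have b2 := hco ⟨2, by omega⟩; rw [e2] at b2
  have b3 := hco ⟨3, by omega⟩; rw [e3] at b3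
  rw [abs_lt] at b0 b1 b2 b3
  rw [mem_body]
  refine ⟨by linarith, by linarith, by linarith, ?_, ?_, ?_, ?_⟩
  · rcases hs with rfl | rfl <;> simp only [one_mul, neg_mul] <;> linarith
  · rcases hs with rfl | rfl <;> simp only [one_mul, neg_mul] <;> linarith
  · rcases hs with rfl | rfl <;> simp only [one_mul, neg_mul] <;> linarith
  · intro i hi
    have hne : ¬((i:ℕ) = 2 ∨ (i:ℕ) = 3) := by omega
    have ec : c i = 1/4 := if_neg hne
    have hb := hco i
    rw [ec, abs_lt] at hb
    constructor <;> linarith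

/-- Reflection of coordinates 2 and 3 around `x/2`, identity on the other coordinates. -/
noncomputable def refl23fun (x : EuclideanSpace ℝ (Fin n)) (p : EuclideanSpace ℝ (Fin n)) :
    EuclideanSpace ℝ (Fin n) :=
  WithLp.toLp 2 (fun i : Fin n => if (i : ℕ) = 2 ∨ (i : ℕ) = 3 then x i - p i else p i)

lemma refl23fun_apply (x p : EuclideanSpace ℝ (Fin n)) (i : Fin n) :
    refl23fun x p i = if (i : ℕ) = 2 ∨ (i : ℕ) = 3 then x i - p i else p i := rfl

lemma refl23fun_invol (x p : EuclideanSpace ℝ (Fin n)) :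
    refl23fun x (refl23fun x p) = p := by
  ext i
  rw [refl23fun_apply, refl23fun_apply]
  split_ifs with h
  · ring
  · rfl

noncomputable def refl23 (x : EuclideanSpace ℝ (Fin n)) :
    EuclideanSpace ℝ (Fin n) ≃ᵢ EuclideanSpace ℝ (Fin n) where
  toFun := refl23fun x
  invFun := refl23fun x
  left_inv := refl23fun_invol x
  right_inv := refl23fun_invol x
  isometry_toFun := by
    refine Isometry.of_dist_eq fun p q => ?_
    rw [EuclideanSpace.dist_eq, EuclideanSpace.dist_eq]
    congr 1
    refine Finset.sum_congr rfl fun i _ => ?_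
    show dist (refl23fun x p i) (refl23fun x q i) ^ 2 = _
    rw [refl23fun_apply, refl23fun_apply, Real.dist_eq, Real.dist_eq]
    split_ifs with h
    · rw [show x i - p i - (x i - q i) = -(p i - q i) by ring, abs_neg]
    · rfl

lemma refl23_apply (x p : EuclideanSpace ℝ (Fin n)) : refl23 x p = refl23fun x p := rfl

lemma sub_coord (a b : EuclideanSpace ℝ (Fin n)) (i : Fin n) : (a - b) i = a i - b i := rfl

lemma add_coord (a b : EuclideanSpace ℝ (Fin n)) (i : Fin n) : (a + b) i = a i + b i := rfl

lemma zero_coord (i : Fin n) : (0 : EuclideanSpace ℝ (Fin n)) i = 0 := rfl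

lemma neg_coord (a : EuclideanSpace ℝ (Fin n)) (i : Fin n) : (-a) i = -a i := rfl

set_option maxHeartbeats 1000000 in
lemma key (hn : 4 ≤ n) (x q : EuclideanSpace ℝ (Fin n)) :
    (refl23fun x q ∈ body n hn 1 ∧ refl23fun x q - x ∈ body n hn 1)
      ↔ (q ∈ body n hn (-1) ∧ q - x ∈ body n hn (-1)) := by
  have E0 : refl23fun x q ⟨0, by omega⟩ = q ⟨0, by omega⟩ := rfl
  have E1 : refl23fun x q ⟨1, by omega⟩ = q ⟨1, by omega⟩ := rfl
  have E2 : refl23fun x q ⟨2, by omega⟩ = x ⟨2, by omega⟩ - q ⟨2, by omega⟩ := rfl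
  have E3 : refl23fun x q ⟨3, by omega⟩ = x ⟨3, by omega⟩ - q ⟨3, by omega⟩ := rfl
  simp only [mem_body, sub_coord, E0, E1, E2, E3]
  constructor
  · rintro ⟨⟨a1, a2, a3, a4, a5, a6, a7⟩, b1, b2, b3, b4, b5, b6, b7⟩
    refine ⟨⟨by linarith, by linarith, by linarith, by linarith, by linarith, by linarith, ?_⟩,
      by linarith, by linarith, by linarith, by linarith, by linarith, by linarith, ?_⟩
    · intro i hi
      have h := a7 i hi
      rwa [refl23fun_apply, if_neg (by omega)] at h
    · intro i hi
      have h := b7 i hi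
      rwa [refl23fun_apply, if_neg (by omega)] at h
  · rintro ⟨⟨a1, a2, a3, a4, a5, a6, a7⟩, b1, b2, b3, b4, b5, b6, b7⟩
    refine ⟨⟨by linarith, by linarith, by linarith, by linarith, by linarith, by linarith, ?_⟩,
      by linarith, by linarith, by linarith, by linarith, by linarith, by linarith, ?_⟩
    · intro i hi
      rw [refl23fun_apply, if_neg (by omega)]
      exact a7 i hi
    · intro i hi
      rw [refl23fun_apply, if_neg (by omega)]
      exact b7 i hi

lemma mem_image_translate (A : Set (EuclideanSpace ℝ (Fin n)))
    (x p : EuclideanSpace ℝ (Fin n)) : p ∈ (· + x) '' A ↔ p - x ∈ A := by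
  constructor
  · rintro ⟨a, ha, rfl⟩
    rwa [add_sub_cancel_right]
  · intro h
    exact ⟨p - x, h, sub_add_cancel p x⟩

lemma mem_image_negtranslate (A : Set (EuclideanSpace ℝ (Fin n)))
    (t p : EuclideanSpace ℝ (Fin n)) : p ∈ (fun q => -q + t) '' A ↔ t - p ∈ A := by
  constructor
  · rintro ⟨a, ha, rfl⟩
    rwa [show t - (-a + t) = a by abel]
  · intro h
    exact ⟨t - p, h, by show -(t - p) + t = p; rw [neg_sub, sub_add_cancel]⟩

lemma image_refl23 (hn : 4 ≤ n) (x : EuclideanSpace ℝ (Fin n)) :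
    (refl23 x) '' (body n hn 1 ∩ ((· + x) '' body n hn 1))
      = body n hn (-1) ∩ ((· + x) '' body n hn (-1)) := by
  ext q
  constructor
  · rintro ⟨p, hp, rfl⟩
    obtain ⟨hp1, hp2⟩ := hp
    rw [mem_image_translate] at hp2
    have h := (key hn x (refl23fun x p)).mp (by rw [refl23fun_invol]; exact ⟨hp1, hp2⟩)
    exact ⟨h.1, (mem_image_translate _ x _).mpr h.2⟩
  · intro hq
    obtain ⟨hq1, hq2⟩ := hq
    rw [mem_image_translate] at hq2
    have h := (key hn x q).mpr ⟨hq1, hq2⟩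
    exact ⟨refl23fun x q, ⟨h.1, (mem_image_translate _ x _).mpr h.2⟩,
      by rw [refl23_apply, refl23fun_invol]⟩

def unitpt (n : ℕ) (k : ℕ) : EuclideanSpace ℝ (Fin n) :=
  WithLp.toLp 2 (fun i : Fin n => if (i : ℕ) = k then (1 : ℝ) else 0)

lemma unitpt_apply_mk (k k' : ℕ) (h : k' < n) :
    unitpt n k ⟨k', h⟩ = if k' = k then 1 else 0 := rfl

lemma unitpt_apply (k : ℕ) (i : Fin n) :
    unitpt n k i = if (i : ℕ) = k then 1 else 0 := rfl

lemma unitpt_mem_body (hn : 4 ≤ n) {s : ℝ} (hs : s = 1 ∨ s = -1) {k : ℕ} (hk : k < 4)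
    (hsk : (k = 2 ∨ k = 3) → s = 1) (hsk' : (k = 0 ∨ k = 1) → True) :
    unitpt n k ∈ body n hn s := by
  rw [mem_body]
  refine ⟨?_, ?_, ?_, ?_, ?_, ?_, ?_⟩
  · rw [unitpt_apply_mk]; split_ifs <;> norm_num
  · rw [unitpt_apply_mk]; split_ifs <;> norm_num
  · rw [unitpt_apply_mk, unitpt_apply_mk]; split_ifs <;> norm_num <;> omega
  · rw [unitpt_apply_mk]; split_ifs with h
    · rw [hsk (by omega)]; norm_num
    · norm_num
  · rw [unitpt_apply_mk]; split_ifs with h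
    · rw [hsk (by omega)]; norm_num
    · norm_num
  · rw [unitpt_apply_mk, unitpt_apply_mk]; split_ifs with h h'
    · omega
    · rw [hsk (by omega)]; norm_num
    · rw [hsk (by omega)]; norm_num
    · norm_num
  · intro i hi
    rw [unitpt_apply, if_neg (by omega)]
    norm_num

lemma not_translate (hn : 4 ≤ n) (t : EuclideanSpace ℝ (Fin n)) :
    body n hn (-1) ≠ (· + t) '' body n hn 1 := by
  intro h
  -- from 0 ∈ body (-1) we get -t ∈ body 1
  have h0 : (0 : EuclideanSpace ℝ (Fin n)) ∈ body n hn (-1) := by simp [mem_body]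
  rw [h, mem_image_translate] at h0
  rw [mem_body] at h0
  obtain ⟨-, -, -, -, -, hz6, -⟩ := h0
  rw [sub_coord, sub_coord, zero_coord, zero_coord] at hz6
  -- unit points in coordinates 2 and 3
  have h2 : unitpt n 2 + t ∈ body n hn (-1) := by
    rw [h, mem_image_translate, add_sub_cancel_right]
    exact unitpt_mem_body hn (Or.inl rfl) (by norm_num) (fun h => rfl) (fun _ => trivial)
  have h3 : unitpt n 3 + t ∈ body n hn (-1) := by
    rw [h, mem_image_translate, add_sub_cancel_right]
    exact unitpt_mem_body hn (Or.inl rfl) (by norm_num) (fun h => rfl) (fun _ => trivial)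
  rw [mem_body] at h2 h3
  obtain ⟨-, -, -, h24, h25, -, -⟩ := h2
  obtain ⟨-, -, -, h34, h35, -, -⟩ := h3
  rw [add_coord, unitpt_apply_mk] at h24 h25 h34 h35
  norm_num at h24 h25 h34 h35
  linarith

lemma not_negtranslate (hn : 4 ≤ n) (t : EuclideanSpace ℝ (Fin n)) :
    body n hn (-1) ≠ (fun q => -q + t) '' body n hn 1 := by
  intro h
  have h0 : (0 : EuclideanSpace ℝ (Fin n)) ∈ body n hn (-1) := by simp [mem_body]
  rw [h, mem_image_negtranslate] at h0
  rw [mem_body] at h0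
  obtain ⟨-, -, hz3, -, -, -, -⟩ := h0
  rw [sub_coord, sub_coord, zero_coord, zero_coord] at hz3
  have h0' : unitpt n 0 ∈ body n hn (-1) :=
    unitpt_mem_body hn (Or.inr rfl) (by norm_num) (by omega) (fun _ => trivial)
  have h1' : unitpt n 1 ∈ body n hn (-1) :=
    unitpt_mem_body hn (Or.inr rfl) (by norm_num) (by omega) (fun _ => trivial)
  rw [h, mem_image_negtranslate, mem_body] at h0' h1'
  obtain ⟨g1, -, -, -, -, -, -⟩ := h0'
  obtain ⟨-, g2, -, -, -, -, -⟩ := h1'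
  rw [sub_coord, unitpt_apply_mk] at g1 g2
  norm_num at g1 g2
  linarith

end CovariogramAux

open CovariogramAux

/-- Theorem 6.1(II): in every dimension `n ≥ 4`, for any `φ` invariant under all isometric
bijections of `ℝⁿ`, there exist convex bodies with equal `φ`-covariograms which are neither
translates nor reflected translates of each other. -/
theorem exists_nondetermined_by_isometry_invariant_covariogram
    (n : ℕ) (hn : 4 ≤ n)
    (φ : Set (EuclideanSpace ℝ (Fin n)) → ℝ)
    (hφ : ∀ (T : EuclideanSpace ℝ (Fin n) ≃ᵢ EuclideanSpace ℝ (Fin n))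
          (A : Set (EuclideanSpace ℝ (Fin n))), φ (T '' A) = φ A) :
    ∃ A A' : Set (EuclideanSpace ℝ (Fin n)),
      A.Nonempty ∧ IsCompact A ∧ Convex ℝ A ∧ (interior A).Nonempty ∧
      A'.Nonempty ∧ IsCompact A' ∧ Convex ℝ A' ∧ (interior A').Nonempty ∧
      (∀ x : EuclideanSpace ℝ (Fin n),
        φ (A ∩ ((· + x) '' A)) = φ (A' ∩ ((· + x) '' A'))) ∧
      (∀ t : EuclideanSpace ℝ (Fin n), A' ≠ (· + t) '' A ∧ A' ≠ (fun p => -p + t) '' A) := by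
  refine ⟨body n hn 1, body n hn (-1),
    body_nonempty hn 1, body_isCompact hn (Or.inl rfl), body_convex hn 1,
    body_interior_nonempty hn (Or.inl rfl),
    body_nonempty hn (-1), body_isCompact hn (Or.inr rfl), body_convex hn (-1),
    body_interior_nonempty hn (Or.inr rfl), ?_, fun t => ⟨not_translate hn t,
      not_negtranslate hn t⟩⟩
  intro x
  rw [← image_refl23 hn x, hφ (refl23 x)]
end

section
/- Let f : ℝ → ℝ be convex on the interval [0,1] with f(0) = 0, and suppose f has right derivative d ≥ 0 at 0 (i.e. f has derivative d at 0 within [0,∞)). For 0 < s ≤ 1 let b(s) denote the Euclidean arc length of the graph of f over [0,s], i.e. the total variation of the curve t ↦ (t, f(t)) ∈ ℝ² (with the Euclidean norm) on [0,s]. Then b(s) = s·√(1 + d²) + o(s) as s → 0⁺; that is, (b(s) − s·√(1 + d²))/s tends to 0 as s tends to 0 from the right. (Lemma 4.3 for the Euclidean norm: near 0 the arc length of a convex graph is asymptotic to the length of the tangent segment.) -/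
open Set Filter
open scoped Topology

private lemma dist_curve_aux (f : ℝ → ℝ) (x y : ℝ) :
    dist ((EuclideanSpace.equiv (Fin 2) ℝ).symm ![x, f x])
      ((EuclideanSpace.equiv (Fin 2) ℝ).symm ![y, f y])
      = Real.sqrt ((x - y) ^ 2 + (f x - f y) ^ 2) := by
  rw [EuclideanSpace.dist_eq]
  simp [Fin.sum_univ_two, Real.dist_eq, sq_abs]

set_option maxHeartbeats 1000000 in
/-- Lemma 4.3 for the Euclidean norm: if `f` is convex on `[0,1]`, `f 0 = 0` and `f` has
right derivative `d ≥ 0` at `0`, then the Euclidean arc length `b s` of the graph of `f`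
over `[0,s]` satisfies `b s = s·√(1 + d²) + o(s)` as `s → 0⁺`. -/
theorem arclength_graph_convex_asymptotic
    (f : ℝ → ℝ) (d : ℝ)
    (hconv : ConvexOn ℝ (Set.Icc (0 : ℝ) 1) f)
    (hf0 : f 0 = 0)
    (hd : HasDerivWithinAt f d (Set.Ici (0 : ℝ)) 0)
    (hd0 : 0 ≤ d)
    (b : ℝ → ℝ)
    (hb : ∀ s, b s =
      (eVariationOn (fun t : ℝ =>
          (EuclideanSpace.equiv (Fin 2) ℝ).symm ![t, f t]) (Set.Icc 0 s)).toReal) :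
    Tendsto (fun s => (b s - s * Real.sqrt (1 + d ^ 2)) / s) (𝓝[>] (0 : ℝ)) (𝓝 0) := by
  set c : ℝ → EuclideanSpace ℝ (Fin 2) :=
    fun t => (EuclideanSpace.equiv (Fin 2) ℝ).symm ![t, f t] with hc
  set M : ℝ → ℝ := fun s => (f (2 * s) - f s) / s with hM
  -- the slope limit at 0
  have T : Tendsto (fun t => f t / t) (𝓝[>] (0 : ℝ)) (𝓝 d) := by
    have h := hasDerivWithinAt_iff_tendsto_slope.mp hd
    rw [Set.Ici_sdiff_left] at h
    refine h.congr fun t => ?_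
    simp [slope_def_field, hf0]
  -- slope from 0 is at least d
  have h01 : ∀ u, u ∈ Ioc (0 : ℝ) 1 → d ≤ f u / u := by
    intro u hu
    refine le_of_tendsto T ?_
    filter_upwards [Ioc_mem_nhdsGT_of_mem ⟨le_rfl, hu.1⟩] with t ht
    have h0m : (0 : ℝ) ∈ Icc (0 : ℝ) 1 := ⟨le_rfl, zero_le_one⟩
    have htm : t ∈ Icc (0 : ℝ) 1 := ⟨ht.1.le, ht.2.trans hu.2⟩
    have hum : u ∈ Icc (0 : ℝ) 1 := ⟨hu.1.le, hu.2⟩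
    have := hconv.secant_mono h0m htm hum ht.1.ne' hu.1.ne' ht.2
    simpa [hf0] using this
  -- key chord slope bounds
  have key : ∀ s, s ∈ Ioc (0 : ℝ) (1 / 2) → ∀ x y : ℝ, 0 ≤ x → x < y → y ≤ s →
      d * (y - x) ≤ f y - f x ∧ f y - f x ≤ M s * (y - x) := by
    intro s hs x y hx hxy hys
    have hs0 : (0 : ℝ) < s := hs.1
    have h2s : 2 * s ≤ 1 := by linarith [hs.2]
    have hxm : x ∈ Icc (0 : ℝ) 1 := ⟨hx, by linarith⟩
    have hym : y ∈ Icc (0 : ℝ) 1 := ⟨by linarith, by linarith⟩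
    have hsm : s ∈ Icc (0 : ℝ) 1 := ⟨hs0.le, by linarith⟩
    have h2sm : 2 * s ∈ Icc (0 : ℝ) 1 := ⟨by linarith, h2s⟩
    have hyx : (0 : ℝ) < y - x := by linarith
    constructor
    · -- lower bound: d ≤ f y / y ≤ slope(x,y)
      have hyd : d ≤ f y / y := h01 y ⟨by linarith, by linarith⟩
      have hsec := hconv.secant_mono hym ⟨le_rfl, zero_le_one⟩ hxm
        (by exact fun h => by simp [← h] at hxy; linarith)
        (ne_of_lt hxy) hx
      -- (f 0 - f y)/(0 - y) ≤ (f x - f y)/(x - y)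
      have hyy : (0 : ℝ) < y := by linarith
      have e1 : (f 0 - f y) / (0 - y) = f y / y := by
        rw [hf0, zero_sub, zero_sub, neg_div_neg_eq]
      have e2 : (f x - f y) / (x - y) = (f y - f x) / (y - x) := by
        rw [show f x - f y = -(f y - f x) by ring, show x - y = -(y - x) by ring, neg_div_neg_eq]
      rw [e1, e2] at hsec
      have : d ≤ (f y - f x) / (y - x) := hyd.trans hsec
      calc d * (y - x) ≤ ((f y - f x) / (y - x)) * (y - x) := by
            exact mul_le_mul_of_nonneg_right this hyx.le
        _ = f y - f x := by field_simp
    · -- upper bound: slope(x,y) ≤ slope(x,2s) ≤ slope(s,2s) = M s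
      have hx2s : x < 2 * s := by linarith
      have hstep1 := hconv.secant_mono hxm hym h2sm (ne_of_gt hxy) (ne_of_gt hx2s)
        (by linarith)
      -- (f y - f x)/(y - x) ≤ (f 2s - f x)/(2s - x)
      have hstep2 := hconv.secant_mono h2sm hxm hsm (ne_of_lt hx2s)
        (by intro h; linarith [h ▸ hs0]) (by linarith)
      -- (f x - f 2s)/(x - 2s) ≤ (f s - f 2s)/(s - 2s)
      have e3 : (f x - f (2 * s)) / (x - 2 * s) = (f (2 * s) - f x) / (2 * s - x) := by
        rw [show f x - f (2 * s) = -(f (2 * s) - f x) by ring,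
          show x - 2 * s = -(2 * s - x) by ring, neg_div_neg_eq]
      have e4 : (f s - f (2 * s)) / (s - 2 * s) = M s := by
        rw [hM, show f s - f (2 * s) = -(f (2 * s) - f s) by ring,
          show s - 2 * s = -s by ring, neg_div_neg_eq]
      rw [e3, e4] at hstep2
      have hchain : (f y - f x) / (y - x) ≤ M s := hstep1.trans hstep2
      calc f y - f x = ((f y - f x) / (y - x)) * (y - x) := by field_simp
        _ ≤ M s * (y - x) := mul_le_mul_of_nonneg_right hchain hyx.le
  -- M s → d
  have hMlim : Tendsto M (𝓝[>] (0 : ℝ)) (𝓝 d) := by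
    have h2 : Tendsto (fun s : ℝ => 2 * s) (𝓝[>] (0 : ℝ)) (𝓝[>] (0 : ℝ)) := by
      apply tendsto_nhdsWithin_of_tendsto_nhds_of_eventually_within
      · have : Tendsto (fun s : ℝ => 2 * s) (𝓝 0) (𝓝 (2 * 0)) :=
          (continuous_const.mul continuous_id).tendsto 0
        simpa using this.mono_left nhdsWithin_le_nhds
      · filter_upwards [self_mem_nhdsWithin] with s hs
        exact mul_pos two_pos (Set.mem_Ioi.mp hs)
    have T2 : Tendsto (fun s : ℝ => f (2 * s) / (2 * s)) (𝓝[>] (0 : ℝ)) (𝓝 d) := T.comp h2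
    have Tc : Tendsto (fun s : ℝ => 2 * (f (2 * s) / (2 * s)) - f s / s)
        (𝓝[>] (0 : ℝ)) (𝓝 (2 * d - d)) := (T2.const_mul 2).sub T
    have heq : ∀ᶠ s in 𝓝[>] (0 : ℝ),
        2 * (f (2 * s) / (2 * s)) - f s / s = M s := by
      filter_upwards [self_mem_nhdsWithin] with s hs
      have hs0 : s ≠ 0 := ne_of_gt hs
      rw [hM]
      field_simp
    have := Tc.congr' heq
    simpa [show 2 * d - d = d by ring] using this
  -- eventual bounds on the quotient
  have hbound : ∀ s, s ∈ Ioc (0 : ℝ) (1 / 2) →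
      0 ≤ (b s - s * Real.sqrt (1 + d ^ 2)) / s ∧
      (b s - s * Real.sqrt (1 + d ^ 2)) / s ≤
        Real.sqrt (1 + (M s) ^ 2) - Real.sqrt (1 + d ^ 2) := by
    intro s hs
    have hs0 : (0 : ℝ) < s := hs.1
    have hMd : d ≤ M s := by
      have := key s hs 0 s le_rfl hs0 le_rfl
      rw [hf0] at this
      have h1 : d * s ≤ M s * s := by
        have := this; simpa using le_trans this.1 this.2
      exact le_of_mul_le_mul_right (by simpa [mul_comm] using h1) hs0
    have hM0 : 0 ≤ M s := hd0.trans hMd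
    -- Lipschitz bound
    have lip : LipschitzOnWith (Real.toNNReal (Real.sqrt (1 + (M s) ^ 2))) c (Icc 0 s) := by
      apply LipschitzOnWith.of_dist_le_mul
      intro x hx y hy
      rcases lt_trichotomy x y with h | h | h
      · -- x < y
        have hkey := key s hs x y hx.1 h hy.2
        have hfd : 0 ≤ f y - f x := le_trans (by nlinarith) hkey.1
        have hdist : dist x y = y - x := by rw [Real.dist_eq, abs_of_nonpos (by linarith)]; ring
        rw [hc]
        rw [dist_curve_aux, hdist]
        have h1 : (x - y) ^ 2 + (f x - f y) ^ 2 ≤ (1 + (M s) ^ 2) * (y - x) ^ 2 := by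
          have h2 : (f x - f y) ^ 2 = (f y - f x) ^ 2 := by ring
          have h3 : (f y - f x) ^ 2 ≤ (M s * (y - x)) ^ 2 := by
            apply sq_le_sq' <;> nlinarith [hkey.1, hkey.2]
          nlinarith [h3]
        calc Real.sqrt ((x - y) ^ 2 + (f x - f y) ^ 2)
            ≤ Real.sqrt ((1 + (M s) ^ 2) * (y - x) ^ 2) := Real.sqrt_le_sqrt h1
          _ = Real.sqrt (1 + (M s) ^ 2) * (y - x) := by
              rw [Real.sqrt_mul (by positivity), Real.sqrt_sq (by linarith)]
          _ = ↑(Real.toNNReal (Real.sqrt (1 + (M s) ^ 2))) * (y - x) := by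
              rw [Real.coe_toNNReal _ (Real.sqrt_nonneg _)]
      · subst h; simp
      · -- y < x
        have hkey := key s hs y x hy.1 h hx.2
        have hfd : 0 ≤ f x - f y := le_trans (by nlinarith) hkey.1
        have hdist : dist x y = x - y := by rw [Real.dist_eq, abs_of_nonneg (by linarith)]
        rw [hc]
        rw [dist_curve_aux, hdist]
        have h1 : (x - y) ^ 2 + (f x - f y) ^ 2 ≤ (1 + (M s) ^ 2) * (x - y) ^ 2 := by
          have h3 : (f x - f y) ^ 2 ≤ (M s * (x - y)) ^ 2 := by
            apply sq_le_sq' <;> nlinarith [hkey.1, hkey.2]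
          nlinarith [h3]
        calc Real.sqrt ((x - y) ^ 2 + (f x - f y) ^ 2)
            ≤ Real.sqrt ((1 + (M s) ^ 2) * (x - y) ^ 2) := Real.sqrt_le_sqrt h1
          _ = Real.sqrt (1 + (M s) ^ 2) * (x - y) := by
              rw [Real.sqrt_mul (by positivity), Real.sqrt_sq (by linarith)]
          _ = ↑(Real.toNNReal (Real.sqrt (1 + (M s) ^ 2))) * (x - y) := by
              rw [Real.coe_toNNReal _ (Real.sqrt_nonneg _)]
    -- variation upper bound
    have hvar_le : eVariationOn c (Icc 0 s) ≤
        ENNReal.ofReal (Real.sqrt (1 + (M s) ^ 2) * s) := by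
      have hid : MonotoneOn (id : ℝ → ℝ) (Icc 0 s) := fun a _ b _ h => h
      have hvar_id : eVariationOn (id : ℝ → ℝ) (Icc 0 s) ≤ ENNReal.ofReal s := by
        have := hid.eVariationOn_le (a := 0) (b := s)
          ⟨le_rfl, hs0.le⟩ ⟨hs0.le, le_rfl⟩
        simpa [Set.inter_self] using this
      have hcomp := lip.comp_eVariationOn_le (g := id) (s := Icc (0 : ℝ) s)
        (Set.mapsTo_id _)
      have : eVariationOn c (Icc 0 s) = eVariationOn (c ∘ id) (Icc 0 s) := rfl
      rw [this]
      calc eVariationOn (c ∘ id) (Icc 0 s)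
          ≤ ↑(Real.toNNReal (Real.sqrt (1 + (M s) ^ 2))) * eVariationOn (id : ℝ → ℝ) (Icc 0 s) :=
            hcomp
        _ ≤ ↑(Real.toNNReal (Real.sqrt (1 + (M s) ^ 2))) * ENNReal.ofReal s :=
            mul_le_mul_right hvar_id _
        _ = ENNReal.ofReal (Real.sqrt (1 + (M s) ^ 2)) * ENNReal.ofReal s := rfl
        _ = ENNReal.ofReal (Real.sqrt (1 + (M s) ^ 2) * s) :=
            (ENNReal.ofReal_mul (Real.sqrt_nonneg _)).symm
    have hfin : eVariationOn c (Icc 0 s) ≠ ⊤ :=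
      (hvar_le.trans_lt ENNReal.ofReal_lt_top).ne
    -- b s upper bound
    have hbs_le : b s ≤ Real.sqrt (1 + (M s) ^ 2) * s := by
      rw [hb s]
      exact ENNReal.toReal_le_of_le_ofReal (by positivity) hvar_le
    -- b s lower bound
    have hbs_ge : s * Real.sqrt (1 + d ^ 2) ≤ b s := by
      have hedist := eVariationOn.edist_le c (x := 0) (y := s)
        (Set.mem_Icc.mpr ⟨le_rfl, hs0.le⟩) (Set.mem_Icc.mpr ⟨hs0.le, le_rfl⟩)
      have hdist_le : dist (c 0) (c s) ≤ b s := by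
        rw [hb s, dist_edist]
        exact ENNReal.toReal_mono hfin hedist
      have hfs : d * s ≤ f s := by
        have := (key s hs 0 s le_rfl hs0 le_rfl).1
        rw [hf0] at this; simpa using this
      have hfs0 : 0 ≤ f s := le_trans (by positivity) hfs
      have hdc : dist (c 0) (c s) = Real.sqrt (s ^ 2 + (f s) ^ 2) := by
        rw [hc, dist_curve_aux]
        rw [hf0]
        ring_nf
      have hge : s * Real.sqrt (1 + d ^ 2) ≤ Real.sqrt (s ^ 2 + (f s) ^ 2) := by
        have h1 : s ^ 2 * (1 + d ^ 2) ≤ s ^ 2 + (f s) ^ 2 := by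
          nlinarith [mul_self_le_mul_self (by positivity : (0:ℝ) ≤ d * s) hfs]
        calc s * Real.sqrt (1 + d ^ 2) = Real.sqrt (s ^ 2) * Real.sqrt (1 + d ^ 2) := by
              rw [Real.sqrt_sq hs0.le]
          _ = Real.sqrt (s ^ 2 * (1 + d ^ 2)) := (Real.sqrt_mul (sq_nonneg s) _).symm
          _ ≤ Real.sqrt (s ^ 2 + (f s) ^ 2) := Real.sqrt_le_sqrt h1
      calc s * Real.sqrt (1 + d ^ 2) ≤ Real.sqrt (s ^ 2 + (f s) ^ 2) := hge
        _ = dist (c 0) (c s) := hdc.symm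
        _ ≤ b s := hdist_le
    constructor
    · apply div_nonneg _ hs0.le
      linarith
    · rw [div_le_iff₀ hs0]
      calc b s - s * Real.sqrt (1 + d ^ 2)
          ≤ Real.sqrt (1 + (M s) ^ 2) * s - s * Real.sqrt (1 + d ^ 2) := by linarith
        _ = (Real.sqrt (1 + (M s) ^ 2) - Real.sqrt (1 + d ^ 2)) * s := by ring
  -- squeeze
  have hg : Tendsto (fun s => Real.sqrt (1 + (M s) ^ 2) - Real.sqrt (1 + d ^ 2))
      (𝓝[>] (0 : ℝ)) (𝓝 0) := by
    have h1 : Tendsto (fun s => 1 + (M s) ^ 2) (𝓝[>] (0 : ℝ)) (𝓝 (1 + d ^ 2)) :=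
      tendsto_const_nhds.add (hMlim.pow 2)
    have h2 := (h1.sqrt).sub (tendsto_const_nhds (x := Real.sqrt (1 + d ^ 2)))
    simpa using h2
  have hmem : ∀ᶠ s in 𝓝[>] (0 : ℝ), s ∈ Ioc (0 : ℝ) (1 / 2) :=
    Ioc_mem_nhdsGT_of_mem ⟨le_rfl, one_half_pos⟩
  apply squeeze_zero'
  · filter_upwards [hmem] with s hs using (hbound s hs).1
  · filter_upwards [hmem] with s hs using (hbound s hs).2
  · exact hg
end
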